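/- arXiv:1810.08665 — 2 statements merged into one kernel-verified Lean document; each statement's English description precedes it below -/
import Mathlib

section
/- If G is a graph with divisorial gonality gon(G) = 3, then (1) the genus of G satisfies g(G) ≥ 3, and (2) either the edge-connectivity of G satisfies η(G) ≤ 3, or |V(G)| = 3. -/
/-- A finite loopless multigraph: a finite vertex type, a finite edge type,
and an assignment of an unordered pair of distinct endpoints to each edge. -/
structure Multigraph where
  V : Type
  E : Type
  [fintypeV : Fintype V]
  [fintypeE : Fintype E]
  [decEqV : DecidableEq V]
  ends : E → Sym2 V
  loopless : ∀ e, ¬ (ends e).IsDiag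

attribute [instance] Multigraph.fintypeV Multigraph.fintypeE Multigraph.decEqV

namespace Multigraph

/-- The graph obtained by deleting the edges in `W` is connected (finite graphs are
connected iff the vertex set is nonempty and every nonempty proper vertex subset
has an edge leaving it). -/
def ConnectedWithout (G : Multigraph) (W : Set G.E) : Prop :=
  Nonempty G.V ∧
    ∀ A : Finset G.V, A.Nonempty → A ≠ Finset.univ →
      ∃ e, e ∉ W ∧ ∃ u v, G.ends e = s(u, v) ∧ u ∈ A ∧ v ∉ A

/-- `G` is connected. -/
def Connected (G : Multigraph) : Prop := G.ConnectedWithout ∅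

/-- `G` is `k`-edge-connected: deleting any set of at most `k - 1` edges
leaves a connected graph. -/
def EdgeConnected (G : Multigraph) (k : ℕ) : Prop :=
  ∀ W : Finset G.E, W.card < k → G.ConnectedWithout ↑W

/-- An edge is a bridge if deleting it disconnects the graph. -/
def IsBridge (G : Multigraph) (e : G.E) : Prop := ¬ G.ConnectedWithout {e}

/-- The graph obtained by deleting the vertices in `U` (and all incident edges)
is connected. -/
def ConnectedAvoiding (G : Multigraph) (U : Set G.V) : Prop :=
  (∃ v, v ∉ U) ∧
    ∀ A : Finset G.V, A.Nonempty → (∀ a ∈ A, a ∉ U) → (∃ w, w ∉ U ∧ w ∉ A) →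
      ∃ e u v, G.ends e = s(u, v) ∧ u ∈ A ∧ v ∉ A ∧ v ∉ U

/-- `G` is `k`-vertex-connected: deleting any set of at most `k - 1` vertices
leaves a connected graph. -/
def VertexConnected (G : Multigraph) (k : ℕ) : Prop :=
  ∀ U : Finset G.V, U.card < k → G.ConnectedAvoiding ↑U

/-- `G` is simple: no two distinct edges have the same pair of endpoints. -/
def Simple (G : Multigraph) : Prop :=
  ∀ e e' : G.E, G.ends e = G.ends e' → e = e'

/-- The genus `g(G) = |E| - |V| + 1`. -/
def genus (G : Multigraph) : ℤ :=
  (Fintype.card G.E : ℤ) - (Fintype.card G.V : ℤ) + 1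

/-- A tree is a connected graph of genus 0. -/
def IsTree (G : Multigraph) : Prop := G.Connected ∧ G.genus = 0

/-- The number of edges joining `u` and `v`. -/
noncomputable def numEdges (G : Multigraph) (u v : G.V) : ℕ :=
  Set.ncard {e : G.E | G.ends e = s(u, v)}

/-- The valence of a vertex: the number of incident edges. -/
noncomputable def valence (G : Multigraph) (v : G.V) : ℕ :=
  Set.ncard {e : G.E | v ∈ G.ends e}

/-- A divisor on `G`: an element of the free abelian group on `V(G)`. -/
abbrev Divisor (G : Multigraph) : Type := G.V → ℤ

/-- The degree of a divisor: the sum of its coefficients. -/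
def degree (G : Multigraph) (D : G.Divisor) : ℤ := ∑ v, D v

/-- A divisor is effective if all its coefficients are nonnegative. -/
def Effective (G : Multigraph) (D : G.Divisor) : Prop := ∀ v, 0 ≤ D v

/-- The Laplacian of `G` applied to an integer vector `f`. -/
noncomputable def laplacian (G : Multigraph) (f : G.V → ℤ) : G.Divisor :=
  fun v => ∑ w, (G.numEdges v w : ℤ) * (f v - f w)

/-- Linear equivalence of divisors: the difference is in the image of the Laplacian. -/
def LinEquiv (G : Multigraph) (D D' : G.Divisor) : Prop :=
  ∃ f : G.V → ℤ, D - D' = G.laplacian f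

/-- `D - F` is equivalent to an effective divisor for every effective `F` of degree `k`. -/
def RankGe (G : Multigraph) (D : G.Divisor) (k : ℤ) : Prop :=
  ∀ F : G.Divisor, G.Effective F → G.degree F = k →
    ∃ E' : G.Divisor, G.Effective E' ∧ G.LinEquiv (D - F) E'

/-- The Baker–Norine rank of a divisor. -/
noncomputable def rank (G : Multigraph) (D : G.Divisor) : ℤ :=
  sSup {r : ℤ | r = -1 ∨ (0 ≤ r ∧ G.RankGe D r)}

/-- The (divisorial) gonality of `G`: the minimum degree of an effective divisor
of rank at least 1. -/
noncomputable def gonality (G : Multigraph) : ℕ :=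
  sInf {n : ℕ | ∃ D : G.Divisor, G.Effective D ∧ G.degree D = (n : ℤ) ∧ 1 ≤ G.rank D}

end Multigraph

/-- A morphism of multigraphs: vertices map to vertices, and each edge maps either
to an edge joining the images of its endpoints (if they are distinct) or to the
common image of its endpoints. -/
structure Morphism (G G' : Multigraph) where
  vertexMap : G.V → G'.V
  edgeMap : G.E → G'.E ⊕ G'.V
  map_edge_of_eq : ∀ e u v, G.ends e = s(u, v) → vertexMap u = vertexMap v →
    edgeMap e = Sum.inr (vertexMap u)
  map_edge_of_ne : ∀ e u v, G.ends e = s(u, v) → vertexMap u ≠ vertexMap v →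
    ∃ e', edgeMap e = Sum.inl e' ∧ G'.ends e' = s(vertexMap u, vertexMap v)

namespace Morphism

variable {G G' : Multigraph}

/-- The multiplicity `m_φ(v)` of `φ` at `v` with respect to an edge `e'` of `G'`. -/
noncomputable def mult (φ : Morphism G G') (v : G.V) (e' : G'.E) : ℕ :=
  Set.ncard {e : G.E | v ∈ G.ends e ∧ φ.edgeMap e = Sum.inl e'}

/-- `φ` is harmonic if `m_φ(v)` does not depend on the chosen edge `e'`
incident to `φ(v)`. -/
def Harmonic (φ : Morphism G G') : Prop :=
  ∀ (v : G.V) (e₁ e₂ : G'.E),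
    φ.vertexMap v ∈ G'.ends e₁ → φ.vertexMap v ∈ G'.ends e₂ →
      φ.mult v e₁ = φ.mult v e₂

/-- `φ` is non-degenerate if `m_φ(v) > 0` for every vertex `v`. -/
def Nondegenerate (φ : Morphism G G') : Prop :=
  ∀ (v : G.V) (e' : G'.E), φ.vertexMap v ∈ G'.ends e' → 0 < φ.mult v e'

/-- `φ` has degree `d`: every edge of `G'` has exactly `d` preimages. -/
def HasDegree (φ : Morphism G G') (d : ℕ) : Prop :=
  Nonempty G'.E ∧ ∀ e' : G'.E, Set.ncard {e : G.E | φ.edgeMap e = Sum.inl e'} = d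

end Morphism

namespace Multigraph

open Finset
open scoped Classical

variable (G : Multigraph)


open Finset
open scoped Classical

variable (G : Multigraph)

lemma numEdges_eq (u v : G.V) :
    G.numEdges u v = (univ.filter fun e => G.ends e = s(u, v)).card := by
  rw [numEdges, Set.ncard_eq_toFinset_card']
  congr 1
  ext e
  simp

lemma numEdges_comm (u v : G.V) : G.numEdges u v = G.numEdges v u := by
  unfold numEdges
  rw [Sym2.eq_swap]

lemma numEdges_self (v : G.V) : G.numEdges v v = 0 := by
  rw [numEdges_eq]
  rw [Finset.card_eq_zero]
  ext e
  simp only [mem_filter, mem_univ, true_and, Finset.notMem_empty, iff_false]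
  intro h
  exact G.loopless e (h ▸ (by simp [Sym2.mk_isDiag_iff]))

lemma numEdges_pos_of_edge {e : G.E} {u v : G.V} (h : G.ends e = s(u, v)) :
    1 ≤ G.numEdges u v := by
  rw [numEdges_eq, Nat.succ_le_iff, Finset.card_pos]
  exact ⟨e, by simp [h]⟩

lemma ends_ne {e : G.E} {u v : G.V} (h : G.ends e = s(u, v)) : u ≠ v := by
  intro huv
  exact G.loopless e (h ▸ (by simp [huv, Sym2.mk_isDiag_iff]))

lemma sum_antisym_zero (A : Finset G.V) (F : G.V → G.V → ℤ)
    (h : ∀ v w, F v w = - F w v) :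
    ∑ v ∈ A, ∑ w ∈ A, F v w = 0 := by
  have h1 : ∑ v ∈ A, ∑ w ∈ A, F v w = ∑ w ∈ A, ∑ v ∈ A, F v w := Finset.sum_comm
  have h2 : ∑ w ∈ A, ∑ v ∈ A, F v w = - ∑ v ∈ A, ∑ w ∈ A, F v w := by
    rw [← Finset.sum_neg_distrib]
    apply Finset.sum_congr rfl
    intro w _
    rw [← Finset.sum_neg_distrib]
    apply Finset.sum_congr rfl
    intro v _
    rw [h v w]
  omega

lemma sum_lap (A : Finset G.V) (f : G.V → ℤ) :
    ∑ v ∈ A, G.laplacian f v = ∑ v ∈ A, ∑ w ∈ Aᶜ, (G.numEdges v w : ℤ) * (f v - f w) := by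
  have key : ∀ v ∈ A, G.laplacian f v
      = (∑ w ∈ A, (G.numEdges v w : ℤ) * (f v - f w))
        + ∑ w ∈ Aᶜ, (G.numEdges v w : ℤ) * (f v - f w) := by
    intro v _
    rw [laplacian, ← Finset.sum_add_sum_compl A]
  rw [Finset.sum_congr rfl key, Finset.sum_add_distrib]
  have hz : ∑ v ∈ A, ∑ w ∈ A, (G.numEdges v w : ℤ) * (f v - f w) = 0 := by
    apply G.sum_antisym_zero A
    intro v w
    rw [G.numEdges_comm v w]
    ring
  rw [hz, zero_add]

lemma degree_lap (f : G.V → ℤ) : G.degree (G.laplacian f) = 0 := by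
  have := G.sum_lap univ f
  simpa [degree] using this

lemma degree_sub (D D' : G.Divisor) : G.degree (D - D') = G.degree D - G.degree D' := by
  simp [degree, Finset.sum_sub_distrib]

lemma degree_add (D D' : G.Divisor) : G.degree (D + D') = G.degree D + G.degree D' := by
  simp [degree, Finset.sum_add_distrib]

lemma LinEquiv.refl (D : G.Divisor) : G.LinEquiv D D := by
  refine ⟨0, ?_⟩
  funext v
  simp [laplacian]

lemma LinEquiv.symm' {D D' : G.Divisor} (h : G.LinEquiv D D') : G.LinEquiv D' D := by
  obtain ⟨f, hf⟩ := h
  refine ⟨-f, ?_⟩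
  funext v
  have h1 := congrFun hf v
  simp only [Pi.sub_apply] at h1 ⊢
  simp only [laplacian] at h1 ⊢
  have h2 : ∑ w, (G.numEdges v w : ℤ) * ((-f) v - (-f) w)
      = - ∑ w, (G.numEdges v w : ℤ) * (f v - f w) := by
    rw [← Finset.sum_neg_distrib]
    apply Finset.sum_congr rfl
    intro w _
    simp only [Pi.neg_apply]
    ring
  rw [h2, ← h1]
  ring

lemma LinEquiv.trans' {D D' D'' : G.Divisor} (h : G.LinEquiv D D') (h' : G.LinEquiv D' D'') :
    G.LinEquiv D D'' := by
  obtain ⟨f, hf⟩ := h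
  obtain ⟨g, hg⟩ := h'
  refine ⟨f + g, ?_⟩
  funext v
  have h1 := congrFun hf v
  have h2 := congrFun hg v
  simp only [Pi.sub_apply] at h1 h2 ⊢
  simp only [laplacian, Pi.add_apply] at h1 h2 ⊢
  rw [show D v - D'' v = (D v - D' v) + (D' v - D'' v) by ring, h1, h2,
    ← Finset.sum_add_distrib]
  apply Finset.sum_congr rfl
  intro w _
  ring

lemma LinEquiv.add_right {D D' : G.Divisor} (C : G.Divisor) (h : G.LinEquiv D D') :
    G.LinEquiv (D + C) (D' + C) := by
  obtain ⟨f, hf⟩ := h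
  refine ⟨f, ?_⟩
  rw [show D + C - (D' + C) = D - D' by ring, hf]

lemma LinEquiv.degree_eq {D D' : G.Divisor} (h : G.LinEquiv D D') :
    G.degree D = G.degree D' := by
  obtain ⟨f, hf⟩ := h
  have : G.degree (D - D') = 0 := by rw [hf]; exact G.degree_lap f
  rw [G.degree_sub] at this
  omega

lemma degree_nonneg_of_eff {D : G.Divisor} (h : G.Effective D) : 0 ≤ G.degree D :=
  Finset.sum_nonneg (fun v _ => h v)

lemma sum_le_degree_of_eff {D : G.Divisor} (h : G.Effective D) (A : Finset G.V) :
    ∑ v ∈ A, D v ≤ G.degree D :=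
  Finset.sum_le_sum_of_subset_of_nonneg (Finset.subset_univ A) (fun v _ _ => h v)

lemma apply_le_degree_of_eff {D : G.Divisor} (h : G.Effective D) (v : G.V) :
    D v ≤ G.degree D := by
  have := G.sum_le_degree_of_eff h {v}
  simpa using this


/-- Sum of `numEdges v w` over `w` satisfying `P` equals the number of edges from `v`
to a vertex satisfying `P`, provided `¬ P v`. -/
lemma sum_numEdges_eq_card (v : G.V) (P : G.V → Prop) [DecidablePred P] (hv : ¬ P v) :
    ∑ w ∈ univ.filter P, (G.numEdges v w : ℤ)
      = ((univ.filter (fun e => ∃ w, P w ∧ G.ends e = s(v, w))).card : ℤ) := by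
  classical
  set s : Finset G.E := univ.filter (fun e => ∃ w, P w ∧ G.ends e = s(v, w)) with hs
  have hex : ∀ e ∈ s, ∃ w, P w ∧ G.ends e = s(v, w) := by
    intro e he
    simpa [hs] using he
  set F : G.E → G.V := fun e => if h : ∃ w, P w ∧ G.ends e = s(v, w) then h.choose else v
    with hF
  have hFmem : ∀ e ∈ s, F e ∈ univ.filter P := by
    intro e he
    obtain h := hex e he
    simp only [hF, dif_pos h]
    simpa using h.choose_spec.1
  have hcard := Finset.card_eq_sum_card_fiberwise hFmem
  have hfiber : ∀ w ∈ univ.filter P,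
      (s.filter fun e => F e = w) = univ.filter (fun e => G.ends e = s(v, w)) := by
    intro w hw
    have hPw : P w := by simpa using hw
    ext e
    simp only [Finset.mem_filter, Finset.mem_univ, true_and, hs]
    constructor
    · rintro ⟨h1, h2⟩
      obtain ⟨w', hw', hew'⟩ := h1
      have hch : ∃ w, P w ∧ G.ends e = s(v, w) := ⟨w', hw', hew'⟩
      have hspec := hch.choose_spec
      have : F e = hch.choose := by simp [hF, dif_pos hch]
      rw [this] at h2
      rw [← h2]
      exact hspec.2
    · intro h
      have hch : ∃ w', P w' ∧ G.ends e = s(v, w') := ⟨w, hPw, h⟩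
      refine ⟨hch, ?_⟩
      have hFe : F e = hch.choose := by simp [hF, dif_pos hch]
      have hspec := hch.choose_spec
      rw [hFe]
      have : s(v, hch.choose) = s(v, w) := by rw [← hspec.2, h]
      exact Sym2.congr_right.mp this
  have : (s.card : ℤ) = ∑ w ∈ univ.filter P, ((univ.filter (fun e => G.ends e = s(v, w))).card : ℤ) := by
    rw [hcard]
    push_cast
    apply Finset.sum_congr rfl
    intro w hw
    rw [hfiber w hw]
  rw [this]
  apply Finset.sum_congr rfl
  intro w _
  rw [G.numEdges_eq]

/-- The number of edges crossing a vertex set `A` equals the sum of `numEdges` over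
crossing pairs. -/
lemma card_cross (A : Finset G.V) :
    ((univ.filter (fun e => ∃ u w, G.ends e = s(u, w) ∧ u ∈ A ∧ w ∉ A)).card : ℤ)
      = ∑ u ∈ A, ∑ w ∈ Aᶜ, (G.numEdges u w : ℤ) := by
  classical
  rcases A.eq_empty_or_nonempty with rfl | ⟨a0, ha0⟩
  · simp
  obtain ⟨F, hFspec⟩ : ∃ F : G.E → G.V, ∀ e, (∃ u w, G.ends e = s(u, w) ∧ u ∈ A ∧ w ∉ A) →
      (F e ∈ A ∧ ∃ w, w ∉ A ∧ G.ends e = s(F e, w)) := by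
    refine ⟨fun e => if h : ∃ u w, G.ends e = s(u, w) ∧ u ∈ A ∧ w ∉ A then h.choose else a0,
      fun e h => ?_⟩
    simp only [dif_pos h]
    obtain ⟨hew0, hchA, hw0A⟩ := h.choose_spec.choose_spec
    exact ⟨hchA, h.choose_spec.choose, hw0A, hew0⟩
  set s : Finset G.E := univ.filter (fun e => ∃ u w, G.ends e = s(u, w) ∧ u ∈ A ∧ w ∉ A)
    with hs
  have hFmem : ∀ e ∈ s, F e ∈ A := by
    intro e he
    exact (hFspec e (by simpa [hs] using he)).1
  have hcard := Finset.card_eq_sum_card_fiberwise hFmem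
  have hfiber : ∀ u ∈ A, ((s.filter fun e => F e = u).card : ℤ)
      = ∑ w ∈ Aᶜ, (G.numEdges u w : ℤ) := by
    intro u hu
    have hcompl : univ.filter (fun w => ¬ w ∈ A) = Aᶜ := by
      ext w; simp
    have h1 : (s.filter fun e => F e = u)
        = univ.filter (fun e => ∃ w, (¬ w ∈ A) ∧ G.ends e = s(u, w)) := by
      ext e
      simp only [hs, Finset.mem_filter, Finset.mem_univ, true_and]
      constructor
      · rintro ⟨h, hFe⟩
        obtain ⟨_, w0, hw0A, hew0⟩ := hFspec e h
        exact ⟨w0, hw0A, hFe ▸ hew0⟩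
      · rintro ⟨w, hwA, hew⟩
        have h : ∃ u w, G.ends e = s(u, w) ∧ u ∈ A ∧ w ∉ A := ⟨u, w, hew, hu, hwA⟩
        refine ⟨h, ?_⟩
        obtain ⟨hFA, w0, hw0A, hew0⟩ := hFspec e h
        have heq : s(u, w) = s(F e, w0) := hew.symm.trans hew0
        rcases Sym2.eq_iff.mp heq with ⟨h2, _⟩ | ⟨h2, _⟩
        · exact h2.symm
        · exact absurd (h2 ▸ hu) hw0A
    rw [h1, ← hcompl]
    have hgen := (G.sum_numEdges_eq_card u (fun w => ¬ w ∈ A) (by simp [hu])).symm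
    convert hgen using 4
  calc ((s.card : ℕ) : ℤ) = ((∑ u ∈ A, (s.filter fun e => F e = u).card : ℕ) : ℤ) := by
        rw [← hcard]
    _ = ∑ u ∈ A, ((s.filter fun e => F e = u).card : ℤ) := by push_cast; ring
    _ = ∑ u ∈ A, ∑ w ∈ Aᶜ, (G.numEdges u w : ℤ) := Finset.sum_congr rfl hfiber


lemma exists_cross_edge (hG : G.Connected) {A : Finset G.V} (h1 : A.Nonempty)
    (h2 : A ≠ univ) : ∃ e u w, G.ends e = s(u, w) ∧ u ∈ A ∧ w ∉ A := by
  obtain ⟨e, _, u, w, h⟩ := hG.2 A h1 h2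
  exact ⟨e, u, w, h⟩

lemma lap_indicator_mem (A : Finset G.V) {v : G.V} (hv : v ∈ A) :
    G.laplacian (fun w => if w ∈ A then (1:ℤ) else 0) v = ∑ w ∈ Aᶜ, (G.numEdges v w : ℤ) := by
  rw [laplacian, ← Finset.sum_add_sum_compl A]
  have h1 : ∑ w ∈ A, (G.numEdges v w : ℤ) *
      ((if v ∈ A then (1:ℤ) else 0) - (if w ∈ A then (1:ℤ) else 0)) = 0 := by
    apply Finset.sum_eq_zero
    intro w hw
    simp [hv, hw]
  rw [h1, zero_add]
  apply Finset.sum_congr rfl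
  intro w hw
  have hw' : w ∉ A := by simpa using hw
  simp [hv, hw']

lemma lap_indicator_not_mem (A : Finset G.V) {v : G.V} (hv : v ∉ A) :
    G.laplacian (fun w => if w ∈ A then (1:ℤ) else 0) v ≤ 0 := by
  rw [laplacian]
  apply Finset.sum_nonpos
  intro w _
  rcases Classical.em (w ∈ A) with hw | hw
  · simp only [if_pos hw, if_neg hv]
    have : (0:ℤ) - 1 = -1 := by ring
    rw [this]
    simp
  · simp [hv, hw]

lemma exists_edge_set (hG : G.Connected) :
    ∀ (n : ℕ) (A : Finset G.V), A.Nonempty → Aᶜ.card = n →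
      ∃ S : Finset G.E, S.card = n ∧ ∀ e ∈ S, ∃ u w, G.ends e = s(u, w) ∧ w ∉ A := by
  intro n
  induction n with
  | zero => intro A _ _; exact ⟨∅, by simp⟩
  | succ n ih =>
    intro A hA hcard
    have hAne : A ≠ univ := by
      intro h
      rw [h] at hcard
      simp at hcard
    obtain ⟨e0, u, w, hew, huA, hwA⟩ := G.exists_cross_edge hG hA hAne
    have hcard' : (insert w A)ᶜ.card = n := by
      rw [Finset.compl_insert, Finset.card_erase_of_mem (by simpa using hwA), hcard]
      omega
    obtain ⟨S', hS'card, hS'⟩ := ih (insert w A) ⟨w, Finset.mem_insert_self w A⟩ hcard'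
    have he0 : e0 ∉ S' := by
      intro hmem
      obtain ⟨u', w', hew', hw'⟩ := hS' e0 hmem
      have heq : s(u,w) = s(u',w') := hew.symm.trans hew'
      rcases Sym2.eq_iff.mp heq with ⟨h1, h2⟩ | ⟨h1, h2⟩
      · exact hw' (h2 ▸ Finset.mem_insert_self w A)
      · exact hw' (h1 ▸ Finset.mem_insert_of_mem huA)
    refine ⟨insert e0 S', by rw [Finset.card_insert_of_notMem he0, hS'card], ?_⟩
    intro e he
    rcases Finset.mem_insert.mp he with rfl | he'
    · exact ⟨u, w, hew, hwA⟩
    · obtain ⟨u', w', hew', hw'⟩ := hS' e he'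
      exact ⟨u', w', hew', fun hc => hw' (Finset.mem_insert_of_mem hc)⟩

lemma genus_nonneg (hG : G.Connected) : 0 ≤ G.genus := by
  obtain ⟨v0⟩ := hG.1
  have hcard : ({v0} : Finset G.V)ᶜ.card = Fintype.card G.V - 1 := by
    rw [Finset.card_compl]
    simp
  obtain ⟨S, hScard, _⟩ := G.exists_edge_set hG (Fintype.card G.V - 1) {v0} ⟨v0, by simp⟩ hcard
  have h1 : S.card ≤ Fintype.card G.E := by
    have := Finset.card_le_univ S
    simpa using this
  have h2 : 1 ≤ Fintype.card G.V := Fintype.card_pos_iff.mpr hG.1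
  rw [genus]
  omega

noncomputable def reach (q : G.V) : ℕ → Finset G.V
  | 0 => {q}
  | (k+1) => univ.filter (fun v => v ∈ reach q k ∨ ∃ e u, G.ends e = s(u, v) ∧ u ∈ reach q k)

lemma reach_mono (q : G.V) (k : ℕ) : G.reach q k ⊆ G.reach q (k+1) := by
  intro v hv
  simp only [reach, Finset.mem_filter, Finset.mem_univ, true_and]
  exact Or.inl hv

lemma q_mem_reach (q : G.V) (k : ℕ) : q ∈ G.reach q k := by
  induction k with
  | zero => simp [reach]
  | succ k ih =>
    simp only [reach, Finset.mem_filter, Finset.mem_univ, true_and]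
    exact Or.inl ih

lemma reach_univ (hG : G.Connected) (q : G.V) (v : G.V) :
    v ∈ G.reach q (Fintype.card G.V) := by
  have key : ∀ k, (∀ u, u ∈ G.reach q k) ∨ k + 1 ≤ (G.reach q k).card := by
    intro k
    induction k with
    | zero =>
      right
      simp [reach]
    | succ k ih =>
      by_cases hall : ∀ u, u ∈ G.reach q k
      · left
        intro u
        exact G.reach_mono q k (hall u)
      · rcases ih with h | h
        · exact absurd h hall
        push_neg at hall
        obtain ⟨x, hx⟩ := hall
        have hne : G.reach q k ≠ univ := by
          intro hc
          exact hx (hc ▸ Finset.mem_univ x)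
        obtain ⟨e, u, w, hew, huA, hwA⟩ :=
          G.exists_cross_edge hG ⟨q, G.q_mem_reach q k⟩ hne
        right
        have hw1 : w ∈ G.reach q (k+1) := by
          simp only [reach, Finset.mem_filter, Finset.mem_univ, true_and]
          exact Or.inr ⟨e, u, hew, huA⟩
        have hsub : insert w (G.reach q k) ⊆ G.reach q (k+1) :=
          Finset.insert_subset hw1 (G.reach_mono q k)
        have := Finset.card_le_card hsub
        rw [Finset.card_insert_of_notMem hwA] at this
        omega
  rcases key (Fintype.card G.V) with h | h
  · exact h v
  · exfalso
    have := Finset.card_le_univ (G.reach q (Fintype.card G.V))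
    omega

noncomputable def distTo (hG : G.Connected) (q v : G.V) : ℕ :=
  Nat.find (⟨Fintype.card G.V, G.reach_univ hG q v⟩ : ∃ k, v ∈ G.reach q k)

lemma mem_reach_distTo (hG : G.Connected) (q v : G.V) :
    v ∈ G.reach q (G.distTo hG q v) := by
  have h : ∃ k, v ∈ G.reach q k := ⟨Fintype.card G.V, G.reach_univ hG q v⟩
  exact Nat.find_spec h

lemma distTo_le_card (hG : G.Connected) (q v : G.V) :
    G.distTo hG q v ≤ Fintype.card G.V :=
  Nat.find_le (G.reach_univ hG q v)

lemma distTo_pos (hG : G.Connected) {q v : G.V} (hv : v ≠ q) :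
    1 ≤ G.distTo hG q v := by
  rcases Nat.eq_zero_or_pos (G.distTo hG q v) with h | h
  · exfalso
    have := G.mem_reach_distTo hG q v
    rw [h] at this
    simp [reach] at this
    exact hv this
  · exact h

lemma distTo_step (hG : G.Connected) {q v : G.V} (hv : v ≠ q) :
    ∃ e u, G.ends e = s(u, v) ∧ G.distTo hG q u < G.distTo hG q v := by
  set d := G.distTo hG q v with hd
  have hpos : 1 ≤ d := G.distTo_pos hG hv
  have hmem : v ∈ G.reach q ((d - 1) + 1) := by
    rw [Nat.sub_add_cancel hpos]
    exact G.mem_reach_distTo hG q v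
  simp only [reach, Finset.mem_filter, Finset.mem_univ, true_and] at hmem
  rcases hmem with h | ⟨e, u, hew, hu⟩
  · exfalso
    exact Nat.find_min _ (show d - 1 < d by omega) h
  · refine ⟨e, u, hew, ?_⟩
    have : G.distTo hG q u ≤ d - 1 := Nat.find_le hu
    omega

lemma sum_numEdges_le (v : G.V) :
    ∑ w, (G.numEdges v w : ℤ) ≤ (Fintype.card G.E : ℤ) := by
  have hsplit := Finset.sum_filter_add_sum_filter_not univ (fun w => ¬ w = v)
    (fun w => (G.numEdges v w : ℤ))
  have h2 : ∑ w ∈ univ.filter (fun w => ¬ ¬ w = v), (G.numEdges v w : ℤ) = 0 := by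
    apply Finset.sum_eq_zero
    intro w hw
    have : w = v := by simpa using hw
    rw [this, G.numEdges_self]
    simp
  have h1 := G.sum_numEdges_eq_card v (fun w => ¬ w = v) (by simp)
  beta_reduce at h1
  rw [← hsplit, h2, add_zero, h1]
  exact_mod_cast Finset.card_le_univ _


lemma lap_shift (f : G.V → ℤ) (c : ℤ) :
    G.laplacian (fun v => f v - c) = G.laplacian f := by
  funext v
  rw [laplacian, laplacian]
  apply Finset.sum_congr rfl
  intro w _
  ring

/-- Every divisor has a representative that is nonnegative away from `q`. -/
lemma exists_nonneg_rep (hG : G.Connected) (q : G.V) (D : G.Divisor) :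
    ∃ f : G.V → ℤ, f q = 0 ∧ ∀ v, v ≠ q → 0 ≤ (D - G.laplacian f) v := by
  classical
  set n := Fintype.card G.V with hn
  set B : ℤ := ∑ v, |D v| with hB
  have hB0 : 0 ≤ B := Finset.sum_nonneg (fun v _ => abs_nonneg _)
  have hBv : ∀ v, -D v ≤ B := by
    intro v
    calc -D v ≤ |D v| := neg_le_abs _
      _ ≤ B := Finset.single_le_sum (fun w _ => abs_nonneg (D w)) (Finset.mem_univ v)
  set M : ℤ := (Fintype.card G.E : ℤ) + B + 2 with hM
  have hM1 : 1 ≤ M := by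
    have : (0:ℤ) ≤ (Fintype.card G.E : ℤ) := Int.natCast_nonneg _
    omega
  set d := G.distTo hG q with hdd
  set g : G.V → ℤ := fun v => M ^ (n - d v) with hg
  have hg1 : ∀ v, 1 ≤ g v := fun v => one_le_pow₀ hM1
  have key : ∀ v, v ≠ q → G.laplacian g v ≤ -(B + 1) := by
    intro v hv
    obtain ⟨e0, u0, hew, hdu⟩ := G.distTo_step hG hv
    have hn1 : 1 ≤ G.numEdges v u0 := G.numEdges_pos_of_edge (Sym2.eq_swap ▸ hew)
    have hdvn : d v ≤ n := G.distTo_le_card hG q v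
    have hgu0 : M * g v ≤ g u0 := by
      have hd1 : d u0 < d v := hdu
      have hd2 : d v ≤ n := hdvn
      have hd3 : 1 ≤ d v := G.distTo_pos hG hv
      have hexp : (n - d v) + 1 ≤ n - d u0 := by omega
      calc M * g v = M ^ ((n - d v) + 1) := by rw [hg, pow_succ]; ring
        _ ≤ M ^ (n - d u0) := pow_le_pow_right₀ hM1 hexp
    have hsplit : G.laplacian g v = (G.numEdges v u0 : ℤ) * (g v - g u0)
        + ∑ w ∈ univ.erase u0, (G.numEdges v w : ℤ) * (g v - g w) := by
      rw [laplacian]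
      exact (Finset.add_sum_erase univ (fun w => (G.numEdges v w : ℤ) * (g v - g w))
        (Finset.mem_univ u0)).symm
    have hterm1 : (G.numEdges v u0 : ℤ) * (g v - g u0) ≤ (1 - M) * g v := by
      have hneg : g v - g u0 ≤ (1 - M) * g v := by
        have := hgu0
        nlinarith [hg1 v]
      calc (G.numEdges v u0 : ℤ) * (g v - g u0) ≤ 1 * (g v - g u0) := by
            apply mul_le_mul_of_nonpos_right
            · exact_mod_cast hn1
            · nlinarith [hg1 v, hgu0, hg1 u0]
        _ = g v - g u0 := one_mul _
        _ ≤ (1 - M) * g v := hneg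
    have hterm2 : ∑ w ∈ univ.erase u0, (G.numEdges v w : ℤ) * (g v - g w)
        ≤ (Fintype.card G.E : ℤ) * g v := by
      calc ∑ w ∈ univ.erase u0, (G.numEdges v w : ℤ) * (g v - g w)
          ≤ ∑ w ∈ univ.erase u0, (G.numEdges v w : ℤ) * g v := by
            apply Finset.sum_le_sum
            intro w _
            apply mul_le_mul_of_nonneg_left _ (Int.natCast_nonneg _)
            have := hg1 w
            omega
        _ = (∑ w ∈ univ.erase u0, (G.numEdges v w : ℤ)) * g v := by
            rw [Finset.sum_mul]
        _ ≤ (Fintype.card G.E : ℤ) * g v := by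
            apply mul_le_mul_of_nonneg_right _ (by linarith [hg1 v])
            calc ∑ w ∈ univ.erase u0, (G.numEdges v w : ℤ)
                ≤ ∑ w, (G.numEdges v w : ℤ) :=
                  Finset.sum_le_sum_of_subset_of_nonneg (Finset.erase_subset _ _)
                    (fun w _ _ => Int.natCast_nonneg _)
              _ ≤ (Fintype.card G.E : ℤ) := G.sum_numEdges_le v
    have hcomb : G.laplacian g v ≤ (1 - M + (Fintype.card G.E : ℤ)) * g v := by
      rw [hsplit]
      have := add_le_add hterm1 hterm2
      calc (G.numEdges v u0 : ℤ) * (g v - g u0)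
          + ∑ w ∈ univ.erase u0, (G.numEdges v w : ℤ) * (g v - g w)
          ≤ (1 - M) * g v + (Fintype.card G.E : ℤ) * g v := this
        _ = (1 - M + (Fintype.card G.E : ℤ)) * g v := by ring
    have hfinal : (1 - M + (Fintype.card G.E : ℤ)) * g v ≤ -(B + 1) := by
      have hcoef : 1 - M + (Fintype.card G.E : ℤ) = -(B + 1) := by rw [hM]; ring
      rw [hcoef]
      nlinarith [hg1 v]
    linarith
  refine ⟨fun v => g v - g q, by simp, ?_⟩
  intro v hv
  rw [G.lap_shift g (g q)]
  have := key v hv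
  have := hBv v
  simp only [Pi.sub_apply]
  omega


/-- Values of `f` are bounded for representatives nonnegative away from `q`. -/
lemma member_bound (hG : G.Connected) (q : G.V) (D : G.Divisor) {f : G.V → ℤ}
    (hfq : f q = 0) (hf : ∀ v, v ≠ q → 0 ≤ (D - G.laplacian f) v) (v : G.V) :
    f v ≤ (∑ w, max (D w) 0) * (Fintype.card G.V) := by
  classical
  set K : ℤ := ∑ w, max (D w) 0 with hK
  have hK0 : 0 ≤ K := Finset.sum_nonneg (fun w _ => le_max_right _ _)
  -- claim: f v ≤ K * card {x | f x < f v}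
  have main : ∀ (m : ℕ) (v : G.V), (univ.filter (fun x => f x < f v)).card = m →
      f v ≤ K * m := by
    intro m
    induction m using Nat.strong_induction_on with
    | _ m ih =>
      intro v hm
      rcases le_or_gt (f v) 0 with hfv | hfv
      · calc f v ≤ 0 := hfv
          _ ≤ K * m := by positivity
      · -- f v > 0
        set A : Finset G.V := univ.filter (fun x => f v ≤ f x) with hA
        have hqA : q ∉ A := by
          simp only [hA, Finset.mem_filter, Finset.mem_univ, true_and]
          omega
        have hAne : A.Nonempty := ⟨v, by simp [hA]⟩
        have hAuniv : A ≠ univ := by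
          intro hc
          exact hqA (hc ▸ Finset.mem_univ q)
        obtain ⟨e0, u0, w0, hew, huA, hwA⟩ := G.exists_cross_edge hG hAne hAuniv
        have hfu0 : f v ≤ f u0 := by
          simpa [hA] using huA
        have hfw0 : f w0 < f v := by
          have := hwA
          simp only [hA, Finset.mem_filter, Finset.mem_univ, true_and] at this
          omega
        -- sum over A
        have hDsum : ∑ x ∈ A, D x ≤ K := by
          calc ∑ x ∈ A, D x ≤ ∑ x ∈ A, max (D x) 0 :=
                Finset.sum_le_sum (fun x _ => le_max_left _ _)
            _ ≤ K := Finset.sum_le_sum_of_subset_of_nonneg (Finset.subset_univ A)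
                (fun x _ _ => le_max_right _ _)
        have hlapsum : ∑ x ∈ A, G.laplacian f x ≤ ∑ x ∈ A, D x := by
          apply Finset.sum_le_sum
          intro x hx
          have hxq : x ≠ q := fun hc => hqA (hc ▸ hx)
          have := hf x hxq
          simp only [Pi.sub_apply] at this
          omega
        have hterm : (G.numEdges u0 w0 : ℤ) * (f u0 - f w0)
            ≤ ∑ x ∈ A, ∑ y ∈ Aᶜ, (G.numEdges x y : ℤ) * (f x - f y) := by
          have hw0c : w0 ∈ Aᶜ := by simpa using hwA
          have hnonneg : ∀ x ∈ A, ∀ y ∈ Aᶜ, 0 ≤ (G.numEdges x y : ℤ) * (f x - f y) := by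
            intro x hx y hy
            have hx' : f v ≤ f x := by simpa [hA] using hx
            have hy' : f y < f v := by
              have := hy
              simp only [Finset.mem_compl, hA, Finset.mem_filter, Finset.mem_univ,
                true_and] at this
              omega
            apply mul_nonneg (Int.natCast_nonneg _)
            omega
          calc (G.numEdges u0 w0 : ℤ) * (f u0 - f w0)
              ≤ ∑ y ∈ Aᶜ, (G.numEdges u0 y : ℤ) * (f u0 - f y) := by
                apply Finset.single_le_sum (f := fun y => (G.numEdges u0 y : ℤ) * (f u0 - f y))
                  (fun y hy => hnonneg u0 huA y hy) hw0c
            _ ≤ ∑ x ∈ A, ∑ y ∈ Aᶜ, (G.numEdges x y : ℤ) * (f x - f y) := by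
                apply Finset.single_le_sum
                  (f := fun x => ∑ y ∈ Aᶜ, (G.numEdges x y : ℤ) * (f x - f y))
                  (fun x hx => Finset.sum_nonneg (fun y hy => hnonneg x hx y hy)) huA
        have hn1 : (1:ℤ) ≤ (G.numEdges u0 w0 : ℤ) := by
          exact_mod_cast G.numEdges_pos_of_edge hew
        have hgap : f v - f w0 ≤ K := by
          have h1 : f u0 - f w0 ≤ (G.numEdges u0 w0 : ℤ) * (f u0 - f w0) := by
            nlinarith
          have h2 := G.sum_lap A f
          omega
        -- recurse on w0
        have hsub1 : univ.filter (fun x => f x < f w0) ⊆ univ.filter (fun x => f x < f v) := by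
          intro x hx
          simp only [Finset.mem_filter, Finset.mem_univ, true_and] at hx ⊢
          omega
        have hsubset : univ.filter (fun x => f x < f w0) ⊂ univ.filter (fun x => f x < f v) :=
          (Finset.ssubset_iff_of_subset hsub1).mpr ⟨w0, by simp [hfw0], by simp⟩
        have hcardlt : (univ.filter (fun x => f x < f w0)).card < m := by
          rw [← hm]
          exact Finset.card_lt_card hsubset
        have hrec := ih _ hcardlt w0 rfl
        have hm1 : 1 ≤ m := by
          rcases Nat.eq_zero_or_pos m with h0 | h; swap
          · exact h
          exfalso
          rw [h0, Finset.card_eq_zero] at hm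
          have : w0 ∈ univ.filter (fun x => f x < f v) := by simp [hfw0]
          rw [hm] at this
          exact absurd this (Finset.notMem_empty _)
        have hcard2 : ((univ.filter (fun x => f x < f w0)).card : ℤ) ≤ (m : ℤ) - 1 := by
          exact_mod_cast Nat.le_sub_one_of_lt hcardlt
        have : f w0 ≤ K * ((m:ℤ) - 1) := by
          calc f w0 ≤ K * ((univ.filter (fun x => f x < f w0)).card : ℤ) := hrec
            _ ≤ K * ((m:ℤ) - 1) := by
              apply mul_le_mul_of_nonneg_left hcard2 hK0
        nlinarith
  have hcard : (univ.filter (fun x => f x < f v)).card ≤ Fintype.card G.V := by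
    simpa using Finset.card_le_univ _
  have := main _ v rfl
  calc f v ≤ K * ((univ.filter (fun x => f x < f v)).card : ℤ) := this
    _ ≤ K * (Fintype.card G.V : ℤ) := by
      apply mul_le_mul_of_nonneg_left _ hK0
      exact_mod_cast hcard

/-- Existence of a `q`-reduced representative. -/
lemma exists_reduced (hG : G.Connected) (q : G.V) (D : G.Divisor) :
    ∃ f : G.V → ℤ,
      (∀ v, v ≠ q → 0 ≤ (D - G.laplacian f) v) ∧
      (∀ A : Finset G.V, A.Nonempty → q ∉ A →
        ∃ v ∈ A, (D - G.laplacian f) v <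
          ((univ.filter (fun e => ∃ w, (¬ w ∈ A) ∧ G.ends e = s(v, w))).card : ℤ)) := by
  classical
  set T : Set ℤ := {s | ∃ f : G.V → ℤ, (f q = 0 ∧ ∀ v, v ≠ q → 0 ≤ (D - G.laplacian f) v)
      ∧ s = ∑ v, f v} with hT
  have hTne : ∃ s, s ∈ T := by
    obtain ⟨f, hfq, hf⟩ := G.exists_nonneg_rep hG q D
    exact ⟨∑ v, f v, f, ⟨hfq, hf⟩, rfl⟩
  have hTbdd : ∃ b, ∀ s ∈ T, s ≤ b := by
    refine ⟨(Fintype.card G.V : ℤ) * ((∑ w, max (D w) 0) * (Fintype.card G.V)), ?_⟩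
    rintro s ⟨f, ⟨hfq, hf⟩, rfl⟩
    calc ∑ v, f v ≤ ∑ _v : G.V, (∑ w, max (D w) 0) * (Fintype.card G.V) :=
          Finset.sum_le_sum (fun v _ => G.member_bound hG q D hfq hf v)
      _ = (Fintype.card G.V : ℤ) * ((∑ w, max (D w) 0) * (Fintype.card G.V)) := by
          rw [Finset.sum_const, Finset.card_univ]
          ring
  obtain ⟨lub, hlubmem, hlub⟩ := Int.exists_greatest_of_bdd hTbdd hTne
  obtain ⟨f, ⟨hfq, hf⟩, hfsum⟩ := hlubmem
  refine ⟨f, hf, ?_⟩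
  intro A hAne hqA
  by_contra hcon
  push_neg at hcon
  -- fire A : contradiction with maximality
  set f' : G.V → ℤ := fun v => f v + (if v ∈ A then 1 else 0) with hf'
  have hlapf' : ∀ v, G.laplacian f' v
      = G.laplacian f v + G.laplacian (fun w => if w ∈ A then (1:ℤ) else 0) v := by
    intro v
    rw [laplacian, laplacian, laplacian, ← Finset.sum_add_distrib]
    apply Finset.sum_congr rfl
    intro w _
    simp only [hf']
    ring
  have hf'q : f' q = 0 := by
    simp only [hf', if_neg hqA, hfq]
    ring
  have hf'mem : ∀ v, v ≠ q → 0 ≤ (D - G.laplacian f') v := by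
    intro v hvq
    simp only [Pi.sub_apply, hlapf']
    rcases Classical.em (v ∈ A) with hvA | hvA
    · have h1 := hcon v hvA
      have h2 : G.laplacian (fun w => if w ∈ A then (1:ℤ) else 0) v
          = ∑ w ∈ Aᶜ, (G.numEdges v w : ℤ) := G.lap_indicator_mem A hvA
      have h3 : ∑ w ∈ Aᶜ, (G.numEdges v w : ℤ)
          = ((univ.filter (fun e => ∃ w, (¬ w ∈ A) ∧ G.ends e = s(v, w))).card : ℤ) := by
        have hcompl : Aᶜ = univ.filter (fun w => ¬ w ∈ A) := by ext w; simp
        rw [hcompl]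
        exact G.sum_numEdges_eq_card v (fun w => ¬ w ∈ A) (by simp [hvA])
      rw [h2, h3]
      simp only [Pi.sub_apply] at h1
      omega
    · have h2 := G.lap_indicator_not_mem A hvA
      have h1 := hf v hvq
      simp only [Pi.sub_apply] at h1
      omega
  have hmemT : (∑ v, f' v) ∈ T := ⟨f', ⟨hf'q, hf'mem⟩, rfl⟩
  have hgt : ∑ v, f v < ∑ v, f' v := by
    have hsplit : ∑ v, f' v = ∑ v, f v + ∑ v, (if v ∈ A then (1:ℤ) else 0) := by
      rw [← Finset.sum_add_distrib]
    have hcA : ∑ v, (if v ∈ A then (1:ℤ) else 0) = (A.card : ℤ) := by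
      rw [Finset.sum_ite_mem, Finset.univ_inter, Finset.sum_const]
      ring
    have hA1 : 1 ≤ A.card := Finset.card_pos.mpr hAne
    have : (1:ℤ) ≤ (A.card : ℤ) := by exact_mod_cast hA1
    omega
  have := hlub _ hmemT
  omega


lemma ends_exists_rep (e : G.E) : ∃ a b, G.ends e = s(a, b) := by
  generalize hz : G.ends e = z
  induction z using Sym2.ind with
  | _ a b => exact ⟨a, b, rfl⟩

lemma exists_head (σ : G.V → ℕ) (e : G.E) :
    ∃ x, x ∈ G.ends e ∧ ∀ y ∈ G.ends e, σ y ≤ σ x := by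
  obtain ⟨a, b, hab⟩ := G.ends_exists_rep e
  rcases le_or_gt (σ a) (σ b) with h | h
  · refine ⟨b, by simp [hab], ?_⟩
    intro y hy
    rw [hab, Sym2.mem_iff] at hy
    rcases hy with rfl | rfl
    · exact h
    · exact le_refl _
  · refine ⟨a, by simp [hab], ?_⟩
    intro y hy
    rw [hab, Sym2.mem_iff] at hy
    rcases hy with rfl | rfl
    · exact le_refl _
    · omega

noncomputable def heads (σ : G.V → ℕ) (e : G.E) : G.V :=
  Classical.choose (G.exists_head σ e)

lemma heads_mem (σ : G.V → ℕ) (e : G.E) : G.heads σ e ∈ G.ends e :=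
  (Classical.choose_spec (G.exists_head σ e)).1

lemma heads_max (σ : G.V → ℕ) (e : G.E) : ∀ y ∈ G.ends e, σ y ≤ σ (G.heads σ e) :=
  (Classical.choose_spec (G.exists_head σ e)).2

noncomputable def tails (σ : G.V → ℕ) (e : G.E) : G.V :=
  Sym2.Mem.other' (G.heads_mem σ e)

lemma ends_eq_heads_tails (σ : G.V → ℕ) (e : G.E) :
    G.ends e = s(G.heads σ e, G.tails σ e) :=
  (Sym2.other_spec' (G.heads_mem σ e)).symm

lemma tails_mem (σ : G.V → ℕ) (e : G.E) : G.tails σ e ∈ G.ends e :=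
  Sym2.other_mem' (G.heads_mem σ e)

lemma heads_ne_tails (σ : G.V → ℕ) (e : G.E) : G.heads σ e ≠ G.tails σ e :=
  G.ends_ne (G.ends_eq_heads_tails σ e)

lemma sigma_tails_lt (σ : G.V → ℕ) (hσ : Function.Injective σ) (e : G.E) :
    σ (G.tails σ e) < σ (G.heads σ e) := by
  have h1 := G.heads_max σ e (G.tails σ e) (G.tails_mem σ e)
  have h2 : σ (G.tails σ e) ≠ σ (G.heads σ e) :=
    fun hc => (G.heads_ne_tails σ e) (hσ hc).symm
  omega

lemma heads_eq_iff (σ : G.V → ℕ) (hσ : Function.Injective σ) (v : G.V) (e : G.E) :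
    G.heads σ e = v ↔ ∃ w, G.ends e = s(v, w) ∧ σ w < σ v := by
  constructor
  · rintro rfl
    exact ⟨G.tails σ e, G.ends_eq_heads_tails σ e, G.sigma_tails_lt σ hσ e⟩
  · rintro ⟨w, hew, hlt⟩
    have heq : s(v, w) = s(G.heads σ e, G.tails σ e) :=
      hew.symm.trans (G.ends_eq_heads_tails σ e)
    rcases Sym2.eq_iff.mp heq with ⟨h1, _⟩ | ⟨h1, h2⟩
    · exact h1.symm
    · exfalso
      rw [h1, h2] at hlt
      exact absurd (G.sigma_tails_lt σ hσ e) (by omega)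

lemma extract (q : G.V) (D' : G.Divisor)
    (hred : ∀ A : Finset G.V, A.Nonempty → q ∉ A →
      ∃ v ∈ A, D' v < ((univ.filter (fun e => ∃ w, (¬ w ∈ A) ∧ G.ends e = s(v, w))).card : ℤ)) :
    ∀ (n : ℕ) (A : Finset G.V), A.card = n → q ∉ A →
      ∃ σ : G.V → ℕ, (∀ v, v ∉ A → σ v = 0) ∧ (∀ v ∈ A, 1 ≤ σ v) ∧
        Set.InjOn σ A ∧
        ∀ v ∈ A, D' v < ((univ.filter (fun e => ∃ w, G.ends e = s(v, w) ∧
          (w ∉ A ∨ σ w < σ v))).card : ℤ) := by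
  intro n
  induction n with
  | zero =>
    intro A hcard _
    rw [Finset.card_eq_zero] at hcard
    subst hcard
    exact ⟨fun _ => 0, fun _ _ => rfl, by simp, by simp [Set.InjOn], by simp⟩
  | succ n ih =>
    intro A hcard hqA
    have hAne : A.Nonempty := Finset.card_pos.mp (by omega)
    obtain ⟨v1, hv1A, hv1⟩ := hred A hAne hqA
    set A' := A.erase v1 with hA'
    have hcard' : A'.card = n := by
      rw [hA', Finset.card_erase_of_mem hv1A, hcard]
      omega
    have hqA' : q ∉ A' := fun hc => hqA (Finset.mem_of_mem_erase hc)
    obtain ⟨σ', hz', h1', hinj', hmain'⟩ := ih A' hcard' hqA'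
    set σ : G.V → ℕ := fun w => if w = v1 then 1 else if w ∈ A then σ' w + 1 else 0 with hσ
    have hσv1 : σ v1 = 1 := by simp [hσ]
    have hσA' : ∀ w ∈ A', σ w = σ' w + 1 := by
      intro w hw
      have h1 : w ≠ v1 := Finset.ne_of_mem_erase hw
      have h2 : w ∈ A := Finset.mem_of_mem_erase hw
      simp [hσ, h1, h2]
    have hσ0 : ∀ w, w ∉ A → σ w = 0 := by
      intro w hw
      have h1 : w ≠ v1 := fun hc => hw (hc ▸ hv1A)
      simp [hσ, h1, hw]
    have hmemA : ∀ w ∈ A, w = v1 ∨ w ∈ A' := by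
      intro w hw
      rcases Classical.em (w = v1) with h | h
      · exact Or.inl h
      · exact Or.inr (Finset.mem_erase.mpr ⟨h, hw⟩)
    refine ⟨σ, hσ0, ?_, ?_, ?_⟩
    · intro v hv
      rcases hmemA v hv with rfl | hv'
      · omega
      · rw [hσA' v hv']
        omega
    · intro x hx y hy hxy
      rcases hmemA x hx with rfl | hx' <;> rcases hmemA y hy with rfl | hy'
      · rfl
      · rw [hσv1, hσA' y hy'] at hxy
        have := h1' y hy'
        omega
      · rw [hσv1, hσA' x hx'] at hxy
        have := h1' x hx'
        omega
      · rw [hσA' x hx', hσA' y hy'] at hxy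
        exact hinj' hx' hy' (by omega)
    · intro v hv
      rcases hmemA v hv with rfl | hv'
      · -- v = v1
        refine lt_of_lt_of_le hv1 ?_
        have hsub : (univ.filter (fun e => ∃ w, (¬ w ∈ A) ∧ G.ends e = s(v, w)))
            ⊆ (univ.filter (fun e => ∃ w, G.ends e = s(v, w) ∧ (w ∉ A ∨ σ w < σ v))) := by
          intro e he
          simp only [Finset.mem_filter, Finset.mem_univ, true_and] at he ⊢
          obtain ⟨w, hw, hew⟩ := he
          exact ⟨w, hew, Or.inl hw⟩
        exact_mod_cast Finset.card_le_card hsub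
      · -- v ∈ A'
        refine lt_of_lt_of_le (hmain' v hv') ?_
        have hsub : (univ.filter (fun e => ∃ w, G.ends e = s(v, w) ∧ (w ∉ A' ∨ σ' w < σ' v)))
            ⊆ (univ.filter (fun e => ∃ w, G.ends e = s(v, w) ∧ (w ∉ A ∨ σ w < σ v))) := by
          intro e he
          simp only [Finset.mem_filter, Finset.mem_univ, true_and] at he ⊢
          obtain ⟨w, hew, hcase⟩ := he
          refine ⟨w, hew, ?_⟩
          rcases Classical.em (w ∈ A) with hwA | hwA
          · right
            rcases hmemA w hwA with rfl | hw'
            · -- w = v1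
              rw [hσv1, hσA' v hv']
              have := h1' v hv'
              omega
            · rw [hσA' w hw', hσA' v hv']
              rcases hcase with hc | hc
              · exact absurd hw' hc
              · omega
          · exact Or.inl hwA
        exact_mod_cast Finset.card_le_card hsub

lemma exists_dhar (q : G.V) (D' : G.Divisor)
    (hred : ∀ A : Finset G.V, A.Nonempty → q ∉ A →
      ∃ v ∈ A, D' v < ((univ.filter (fun e => ∃ w, (¬ w ∈ A) ∧ G.ends e = s(v, w))).card : ℤ)) :
    ∃ σ : G.V → ℕ, Function.Injective σ ∧ σ q = 0 ∧
      ∀ v, v ≠ q → D' v < ((univ.filter (fun e => G.heads σ e = v)).card : ℤ) := by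
  classical
  set A : Finset G.V := univ.erase q with hA
  have hqA : q ∉ A := Finset.notMem_erase q univ
  have hmem : ∀ v, v ≠ q → v ∈ A := by
    intro v hv
    rw [hA]
    exact Finset.mem_erase.mpr ⟨hv, Finset.mem_univ v⟩
  obtain ⟨σ, hσ0, hσ1, hinj, hmain⟩ := G.extract q D' hred A.card A rfl hqA
  have hσq : σ q = 0 := hσ0 q hqA
  have hσinj : Function.Injective σ := by
    intro x y hxy
    by_cases hx : x = q <;> by_cases hy : y = q
    · rw [hx, hy]
    · exfalso
      have := hσ1 y (hmem y hy)
      rw [hx, hσq] at hxy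
      omega
    · exfalso
      have := hσ1 x (hmem x hx)
      rw [hy, hσq] at hxy
      omega
    · exact hinj (hmem x hx) (hmem y hy) hxy
  refine ⟨σ, hσinj, hσq, ?_⟩
  intro v hv
  have hvA := hmem v hv
  refine lt_of_lt_of_le (hmain v hvA) ?_
  have heq : (univ.filter (fun e => ∃ w, G.ends e = s(v, w) ∧ (w ∉ A ∨ σ w < σ v)))
      = (univ.filter (fun e => G.heads σ e = v)) := by
    apply Finset.filter_congr
    intro e _
    rw [G.heads_eq_iff σ hσinj v e]
    constructor
    · rintro ⟨w, hew, hcase⟩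
      refine ⟨w, hew, ?_⟩
      rcases hcase with hc | hc
      · have hwq : w = q := by
          by_contra hne
          exact hc (hmem w hne)
        rw [hwq, hσq]
        have := hσ1 v hvA
        omega
      · exact hc
    · rintro ⟨w, hew, hlt⟩
      exact ⟨w, hew, Or.inr hlt⟩
  rw [heq]

lemma sum_indeg (σ : G.V → ℕ) :
    ∑ v, ((univ.filter (fun e => G.heads σ e = v)).card : ℤ) = (Fintype.card G.E : ℤ) := by
  have h := Finset.card_eq_sum_card_fiberwise
    (f := G.heads σ) (s := (univ : Finset G.E)) (t := (univ : Finset G.V))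
    (fun e _ => Finset.mem_univ _)
  rw [Finset.card_univ] at h
  exact_mod_cast h.symm

lemma indeg_add_indegRev (σ : G.V → ℕ) (v : G.V) :
    (univ.filter (fun e => G.heads σ e = v)).card
      + (univ.filter (fun e => G.tails σ e = v)).card
      = (univ.filter (fun e => v ∈ G.ends e)).card := by
  classical
  have hdisj : Disjoint (univ.filter (fun e => G.heads σ e = v))
      (univ.filter (fun e => G.tails σ e = v)) := by
    rw [Finset.disjoint_left]
    intro e he1 he2
    simp only [Finset.mem_filter, Finset.mem_univ, true_and] at he1 he2
    exact G.heads_ne_tails σ e (he1.trans he2.symm)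
  rw [← Finset.card_union_of_disjoint hdisj, ← Finset.filter_or]
  congr 1
  apply Finset.filter_congr
  intro e _
  rw [G.ends_eq_heads_tails σ e, Sym2.mem_iff]
  constructor
  · rintro (h | h)
    · exact Or.inl h.symm
    · exact Or.inr h.symm
  · rintro (h | h)
    · exact Or.inl h.symm
    · exact Or.inr h.symm

lemma sum_incidence : ∑ v, ((univ.filter (fun e => v ∈ G.ends e)).card : ℤ)
    = 2 * (Fintype.card G.E : ℤ) := by
  classical
  have h1 : ∀ v : G.V, ((univ.filter (fun e => v ∈ G.ends e)).card : ℤ)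
      = ∑ e : G.E, (if v ∈ G.ends e then (1:ℤ) else 0) := by
    intro v
    rw [Finset.card_filter]
    push_cast
    apply Finset.sum_congr rfl
    intro e _
    split <;> simp
  have h2 : ∀ e : G.E, ∑ v : G.V, (if v ∈ G.ends e then (1:ℤ) else 0) = 2 := by
    intro e
    obtain ⟨a, b, hab⟩ := G.ends_exists_rep e
    have hne : a ≠ b := G.ends_ne hab
    have : univ.filter (fun v => v ∈ G.ends e) = {a, b} := by
      ext v
      simp only [Finset.mem_filter, Finset.mem_univ, true_and, hab, Sym2.mem_iff,
        Finset.mem_insert, Finset.mem_singleton]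
    calc ∑ v : G.V, (if v ∈ G.ends e then (1:ℤ) else 0)
        = ∑ v : G.V, (if v ∈ ({a, b} : Finset G.V) then (1:ℤ) else 0) := by
          apply Finset.sum_congr rfl
          intro v _
          congr 1
          rw [eq_iff_iff]
          simp [hab]
      _ = (({a, b} : Finset G.V).card : ℤ) := by
          rw [Finset.sum_ite_mem, Finset.univ_inter, Finset.sum_const]
          ring
      _ = 2 := by
          rw [Finset.card_pair hne]
          norm_num
  calc ∑ v, ((univ.filter (fun e => v ∈ G.ends e)).card : ℤ)
      = ∑ v : G.V, ∑ e : G.E, (if v ∈ G.ends e then (1:ℤ) else 0) :=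
        Finset.sum_congr rfl (fun v _ => h1 v)
    _ = ∑ e : G.E, ∑ v : G.V, (if v ∈ G.ends e then (1:ℤ) else 0) := Finset.sum_comm
    _ = ∑ _e : G.E, (2:ℤ) := Finset.sum_congr rfl (fun e _ => h2 e)
    _ = 2 * (Fintype.card G.E : ℤ) := by
        rw [Finset.sum_const, Finset.card_univ]
        ring


/-- Combined: reduced representative with Dhar data. -/
lemma reduced_dhar (hG : G.Connected) (q : G.V) (D : G.Divisor) :
    ∃ (f : G.V → ℤ) (σ : G.V → ℕ), Function.Injective σ ∧ σ q = 0 ∧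
      (∀ v, v ≠ q → 0 ≤ (D - G.laplacian f) v) ∧
      (∀ v, v ≠ q → (D - G.laplacian f) v
        ≤ ((univ.filter (fun e => G.heads σ e = v)).card : ℤ) - 1) ∧
      ((univ.filter (fun e => G.heads σ e = q)).card = 0) ∧
      (∑ v ∈ univ.erase q, (((univ.filter (fun e => G.heads σ e = v)).card : ℤ) - 1)
        = G.genus) := by
  classical
  obtain ⟨f, hnn, hred⟩ := G.exists_reduced hG q D
  obtain ⟨σ, hσinj, hσq, hmain⟩ := G.exists_dhar q (D - G.laplacian f) hred
  have hindegq : (univ.filter (fun e => G.heads σ e = q)).card = 0 := by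
    rw [Finset.card_eq_zero, Finset.eq_empty_iff_forall_notMem]
    intro e he
    simp only [Finset.mem_filter, Finset.mem_univ, true_and] at he
    obtain ⟨w, _, hlt⟩ := (G.heads_eq_iff σ hσinj q e).mp he
    omega
  refine ⟨f, σ, hσinj, hσq, hnn, ?_, hindegq, ?_⟩
  · intro v hv
    have := hmain v hv
    omega
  · have hsum1 : ∑ v ∈ univ.erase q, ((univ.filter (fun e => G.heads σ e = v)).card : ℤ)
        = (Fintype.card G.E : ℤ) := by
      have h1 : ((univ.filter (fun e => G.heads σ e = q)).card : ℤ)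
          + ∑ v ∈ univ.erase q, ((univ.filter (fun e => G.heads σ e = v)).card : ℤ)
          = ∑ v, ((univ.filter (fun e => G.heads σ e = v)).card : ℤ) :=
        Finset.add_sum_erase univ
          (fun v => ((univ.filter (fun e => G.heads σ e = v)).card : ℤ)) (Finset.mem_univ q)
      rw [G.sum_indeg σ] at h1
      rw [hindegq] at h1
      push_cast at h1
      omega
    have hcarderase : ((univ.erase q).card : ℤ) = (Fintype.card G.V : ℤ) - 1 := by
      rw [Finset.card_erase_of_mem (Finset.mem_univ q), Finset.card_univ]
      have : 1 ≤ Fintype.card G.V := Fintype.card_pos_iff.mpr ⟨q⟩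
      push_cast [Nat.cast_sub this]
      ring
    rw [Finset.sum_sub_distrib, hsum1, Finset.sum_const, nsmul_eq_mul, mul_one,
      hcarderase, genus]
    ring

/-- Riemann's inequality: divisors of degree at least `g` are equivalent to
effective divisors. -/
lemma riemann (hG : G.Connected) (D : G.Divisor) (hdeg : G.genus ≤ G.degree D) :
    ∃ E', G.Effective E' ∧ G.LinEquiv D E' := by
  classical
  obtain ⟨q⟩ := hG.1
  obtain ⟨f, σ, hσinj, hσq, hnn, hmain, hindegq, hgsum⟩ := G.reduced_dhar hG q D
  set D' : G.Divisor := D - G.laplacian f with hD'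
  have hsum : ∑ v ∈ univ.erase q, D' v ≤ G.genus := by
    rw [← hgsum]
    apply Finset.sum_le_sum
    intro v hv
    exact hmain v (Finset.ne_of_mem_erase hv)
  have hq' : 0 ≤ D' q := by
    have hdegD' : G.degree D' = G.degree D := by
      rw [hD', G.degree_sub, G.degree_lap]
      ring
    have hsplit : D' q + ∑ v ∈ univ.erase q, D' v = G.degree D' :=
      Finset.add_sum_erase univ D' (Finset.mem_univ q)
    linarith
  refine ⟨D', ?_, ⟨f, sub_sub_cancel _ _⟩⟩
  intro v
  by_cases hv : v = q
  · rw [hv]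
    exact hq'
  · exact hnn v hv

/-- The divisor associated to an acyclic orientation is not equivalent to an
effective divisor. -/
lemma acyclic_not_equiv_eff (hne : Nonempty G.V) (h t : G.E → G.V) (ord : G.V → ℤ)
    (hht : ∀ e, G.ends e = s(h e, t e)) (hord : ∀ e, ord (t e) < ord (h e))
    (E' : G.Divisor) (hE' : G.Effective E') :
    ¬ G.LinEquiv (fun v => ((univ.filter (fun e => h e = v)).card : ℤ) - 1) E' := by
  classical
  rintro ⟨f, hf⟩
  obtain ⟨v0, _, hv0max⟩ := Finset.exists_max_image univ f
    ⟨Classical.arbitrary G.V, Finset.mem_univ _⟩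
  set A : Finset G.V := univ.filter (fun x => f x = f v0) with hA
  have hAne : A.Nonempty := ⟨v0, by simp [hA]⟩
  obtain ⟨u, huA, humin⟩ := Finset.exists_min_image A ord hAne
  have hfu : f u = f v0 := by simpa [hA] using huA
  have hfmax : ∀ w, f w ≤ f u := by
    intro w
    rw [hfu]
    exact hv0max w (Finset.mem_univ w)
  have hfib : ∀ w, ((univ.filter (fun e => h e = u ∧ t e = w)).card : ℤ)
      ≤ (G.numEdges u w : ℤ) * (f u - f w) := by
    intro w
    by_cases hw : w ∈ A
    · have hempty : (univ.filter (fun e => h e = u ∧ t e = w)) = ∅ := by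
        rw [Finset.eq_empty_iff_forall_notMem]
        intro e he
        simp only [Finset.mem_filter, Finset.mem_univ, true_and] at he
        obtain ⟨he1, he2⟩ := he
        have h1 := hord e
        rw [he1, he2] at h1
        have h2 := humin w hw
        omega
      rw [hempty]
      have hfw : f w = f u := by
        have := hw
        simp only [hA, Finset.mem_filter, Finset.mem_univ, true_and] at this
        rw [this, hfu]
      rw [hfw]
      simp
    · have hfw : f w < f u := by
        have h1 : f w ≤ f u := hfmax w
        have h2 : ¬ f w = f v0 := by simpa [hA] using hw
        rw [hfu]
        rw [hfu] at h1
        omega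
      have hsub : (univ.filter (fun e => h e = u ∧ t e = w))
          ⊆ (univ.filter (fun e => G.ends e = s(u, w))) := by
        intro e he
        simp only [Finset.mem_filter, Finset.mem_univ, true_and] at he ⊢
        rw [← he.1, ← he.2]
        exact hht e
      have hcardle : ((univ.filter (fun e => h e = u ∧ t e = w)).card : ℤ)
          ≤ (G.numEdges u w : ℤ) := by
        rw [G.numEdges_eq]
        exact_mod_cast Finset.card_le_card hsub
      have h1 : (1:ℤ) ≤ f u - f w := by omega
      calc ((univ.filter (fun e => h e = u ∧ t e = w)).card : ℤ)
          ≤ (G.numEdges u w : ℤ) := hcardle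
        _ ≤ (G.numEdges u w : ℤ) * (f u - f w) :=
            le_mul_of_one_le_right (Int.natCast_nonneg _) h1
  have hindeg : ((univ.filter (fun e => h e = u)).card : ℤ) ≤ G.laplacian f u := by
    have hfibsum := Finset.card_eq_sum_card_fiberwise
      (f := t) (s := univ.filter (fun e => h e = u)) (t := (univ : Finset G.V))
      (fun e _ => Finset.mem_univ _)
    have heq1 : ∀ w, ((univ.filter (fun e => h e = u)).filter (fun e => t e = w))
        = univ.filter (fun e => h e = u ∧ t e = w) := by
      intro w
      rw [Finset.filter_filter]
    calc ((univ.filter (fun e => h e = u)).card : ℤ)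
        = ∑ w, (((univ.filter (fun e => h e = u)).filter (fun e => t e = w)).card : ℤ) := by
          exact_mod_cast congrArg (Nat.cast (R := ℤ)) hfibsum
      _ = ∑ w, ((univ.filter (fun e => h e = u ∧ t e = w)).card : ℤ) := by
          apply Finset.sum_congr rfl
          intro w _
          rw [heq1 w]
      _ ≤ ∑ w, (G.numEdges u w : ℤ) * (f u - f w) := Finset.sum_le_sum (fun w _ => hfib w)
      _ = G.laplacian f u := rfl
  have hlap := congrFun hf u
  simp only [Pi.sub_apply] at hlap
  have hEu := hE' u
  omega


/-- The canonical divisor. -/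
noncomputable def KDiv : G.Divisor :=
  fun v => ((univ.filter (fun e => v ∈ G.ends e)).card : ℤ) - 2

lemma degree_KDiv : G.degree G.KDiv
    = 2 * (Fintype.card G.E : ℤ) - 2 * (Fintype.card G.V : ℤ) := by
  simp only [degree, KDiv]
  rw [Finset.sum_sub_distrib, G.sum_incidence, Finset.sum_const, Finset.card_univ,
    nsmul_eq_mul]
  ring

/-- The divisor `δ_q`. -/
def delta (q : G.V) : G.Divisor := fun v => if v = q then 1 else 0

lemma effective_delta (q : G.V) : G.Effective (G.delta q) := by
  intro v
  rw [delta]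
  split <;> omega

lemma degree_delta (q : G.V) : G.degree (G.delta q) = 1 := by
  simp only [degree, delta]
  rw [Finset.sum_ite_eq' univ q (fun _ => (1:ℤ))]
  simp

lemma eff_deg_one {F : G.Divisor} (hF : G.Effective F) (hdeg : G.degree F = 1) :
    ∃ w, F = G.delta w := by
  have hex : ∃ w, 1 ≤ F w := by
    by_contra hc
    push_neg at hc
    have : ∀ w, F w = 0 := by
      intro w
      have h1 := hF w
      have h2 := hc w
      omega
    have : G.degree F = 0 := Finset.sum_eq_zero (fun w _ => this w)
    omega
  obtain ⟨w, hw⟩ := hex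
  have hFw : F w = 1 := by
    have := G.apply_le_degree_of_eff hF w
    omega
  refine ⟨w, ?_⟩
  funext v
  rw [delta]
  by_cases hv : v = w
  · rw [if_pos hv, hv, hFw]
  · rw [if_neg hv]
    have hsum : F v + F w ≤ G.degree F := by
      have h1 : ∑ x ∈ ({v, w} : Finset G.V), F x ≤ G.degree F :=
        G.sum_le_degree_of_eff hF {v, w}
      rw [Finset.sum_pair hv] at h1
      exact h1
    have := hF v
    omega

/-- Every divisor of the form `K - δ_q` on a genus-2 graph is equivalent to an
effective divisor. -/
lemma genus_two_canonical (hG : G.Connected) (hg : G.genus = 2) (q : G.V) :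
    ∃ Ev, G.Effective Ev ∧ G.LinEquiv (G.KDiv - G.delta q) Ev := by
  classical
  obtain ⟨f, σ, hσinj, hσq, hnn, hmain, hindegq, hgsum⟩ := G.reduced_dhar hG q G.KDiv
  set D' : G.Divisor := G.KDiv - G.laplacian f with hD'
  have hdegD' : G.degree D' = 2 := by
    have h1 : G.degree D' = G.degree G.KDiv := by
      rw [hD', G.degree_sub, G.degree_lap]
      ring
    rw [h1, G.degree_KDiv]
    have h2 : (Fintype.card G.E : ℤ) - (Fintype.card G.V : ℤ) + 1 = 2 := by
      rw [← genus, hg]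
    omega
  have hsplit : D' q + ∑ v ∈ univ.erase q, D' v = G.degree D' :=
    Finset.add_sum_erase univ D' (Finset.mem_univ q)
  have hsumle : ∑ v ∈ univ.erase q, D' v ≤ 2 := by
    rw [← hg, ← hgsum]
    apply Finset.sum_le_sum
    intro v hv
    exact hmain v (Finset.ne_of_mem_erase hv)
  rcases lt_or_ge (∑ v ∈ univ.erase q, D' v) 2 with hlt | hge
  · -- D' q ≥ 1
    have hq1 : 1 ≤ D' q := by omega
    refine ⟨D' - G.delta q, ?_, ?_⟩
    · intro v
      simp only [Pi.sub_apply, delta]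
      by_cases hv : v = q
      · rw [if_pos hv, hv]
        omega
      · rw [if_neg hv]
        have := hnn v hv
        omega
    · refine ⟨f, ?_⟩
      funext v
      simp only [Pi.sub_apply, hD']
      ring
  · -- equality case : acyclic orientation contradiction
    exfalso
    have hsumeq : ∑ v ∈ univ.erase q, D' v = 2 := le_antisymm hsumle hge
    have hqzero : D' q = 0 := by omega
    have hsums : ∑ v ∈ univ.erase q, D' v
        = ∑ v ∈ univ.erase q, (((univ.filter (fun e => G.heads σ e = v)).card : ℤ) - 1) := by
      rw [hsumeq, hgsum, hg]
    have hpt : ∀ v ∈ univ.erase q,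
        D' v = ((univ.filter (fun e => G.heads σ e = v)).card : ℤ) - 1 := by
      rw [← Finset.sum_eq_sum_iff_of_le (fun v hv => hmain v (Finset.ne_of_mem_erase hv))]
      exact hsums
    -- ν_rev := indeg of tails; show LinEquiv ν_rev (δ q)
    have hKpt : ∀ v, G.KDiv v = ((univ.filter (fun e => G.heads σ e = v)).card : ℤ)
        + ((univ.filter (fun e => G.tails σ e = v)).card : ℤ) - 2 := by
      intro v
      rw [KDiv.eq_def]
      have := G.indeg_add_indegRev σ v
      push_cast [← this]
      ring
    have hDpt : ∀ v, D' v = ((univ.filter (fun e => G.heads σ e = v)).card : ℤ) - 1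
        + G.delta q v := by
      intro v
      by_cases hv : v = q
      · subst hv
        rw [hqzero, hindegq, delta]
        simp
      · rw [hpt v (Finset.mem_erase.mpr ⟨hv, Finset.mem_univ v⟩), delta, if_neg hv]
        ring
    have hequiv : G.LinEquiv (fun v => ((univ.filter (fun e => G.tails σ e = v)).card : ℤ) - 1)
        (G.delta q) := by
      refine ⟨f, ?_⟩
      funext v
      simp only [Pi.sub_apply]
      have h1 : D' v = G.KDiv v - G.laplacian f v := by rw [hD']; rfl
      have h2 := hDpt v
      have h3 := hKpt v
      omega
    exact G.acyclic_not_equiv_eff ⟨q⟩ (G.tails σ) (G.heads σ)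
      (fun v => -(σ v : ℤ))
      (fun e => (G.ends_eq_heads_tails σ e).trans (Sym2.eq_swap))
      (fun e => by
        have := G.sigma_tails_lt σ hσinj e
        show -(σ (G.heads σ e) : ℤ) < -(σ (G.tails σ e) : ℤ)
        omega)
      (G.delta q) (G.effective_delta q) hequiv

/-- A genus-2 graph carries an effective divisor of degree 2 and positive rank. -/
lemma genus_two_exists (hG : G.Connected) (hg : G.genus = 2) :
    ∃ D : G.Divisor, G.Effective D ∧ G.degree D = 2 ∧ G.RankGe D 1 := by
  classical
  obtain ⟨q⟩ := hG.1
  obtain ⟨E0, hE0eff, hE0equiv⟩ := G.genus_two_canonical hG hg q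
  set D : G.Divisor := E0 + G.delta q with hD
  have hDK : G.LinEquiv D G.KDiv := by
    have h1 : G.LinEquiv (G.KDiv - G.delta q) E0 := hE0equiv
    have h2 : G.LinEquiv (G.KDiv - G.delta q + G.delta q) (E0 + G.delta q) :=
      LinEquiv.add_right G (G.delta q) h1
    have h3 : G.KDiv - G.delta q + G.delta q = G.KDiv := by
      funext v
      simp only [Pi.add_apply, Pi.sub_apply]
      ring
    rw [h3] at h2
    exact (LinEquiv.symm' G h2)
  have hdegD : G.degree D = 2 := by
    have h1 : G.degree (G.KDiv - G.delta q) = G.degree E0 := LinEquiv.degree_eq G hE0equiv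
    rw [G.degree_sub, G.degree_KDiv, G.degree_delta] at h1
    rw [hD, G.degree_add, G.degree_delta, ← h1]
    have h2 : (Fintype.card G.E : ℤ) - (Fintype.card G.V : ℤ) + 1 = 2 := by
      rw [← genus, hg]
    omega
  refine ⟨D, ?_, hdegD, ?_⟩
  · intro v
    simp only [hD, Pi.add_apply]
    have h1 := hE0eff v
    have h2 := G.effective_delta q v
    omega
  · intro F hFeff hFdeg
    obtain ⟨w, rfl⟩ := G.eff_deg_one hFeff hFdeg
    obtain ⟨Ew, hEweff, hEwequiv⟩ := G.genus_two_canonical hG hg w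
    refine ⟨Ew, hEweff, ?_⟩
    have h1 : G.LinEquiv (D - G.delta w) (G.KDiv - G.delta w) := by
      have := LinEquiv.add_right G (-(G.delta w)) hDK
      have heq1 : D + -(G.delta w) = D - G.delta w := by
        funext v
        simp only [Pi.add_apply, Pi.neg_apply, Pi.sub_apply]
        ring
      have heq2 : G.KDiv + -(G.delta w) = G.KDiv - G.delta w := by
        funext v
        simp only [Pi.add_apply, Pi.neg_apply, Pi.sub_apply]
        ring
      rwa [heq1, heq2] at this
    exact LinEquiv.trans' G h1 hEwequiv


lemma degree_single (q : G.V) (c : ℤ) : G.degree (fun v => if v = q then c else 0) = c := by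
  simp only [degree]
  rw [Finset.sum_ite_eq' univ q (fun _ => c)]
  simp

lemma rankGe_mono (hne : Nonempty G.V) {D : G.Divisor} {j k : ℤ} (h : G.RankGe D k)
    (hj : 0 ≤ j) (hjk : j ≤ k) : G.RankGe D j := by
  classical
  obtain ⟨q⟩ := hne
  intro F hFeff hFdeg
  set P : G.Divisor := fun v => if v = q then k - j else 0 with hP
  have hPeff : G.Effective P := by
    intro v
    simp only [hP]
    split <;> omega
  have hF'eff : G.Effective (F + P) := by
    intro v
    simp only [Pi.add_apply]
    have h1 := hFeff v
    have h2 := hPeff v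
    omega
  have hF'deg : G.degree (F + P) = k := by
    rw [G.degree_add, hFdeg, hP, G.degree_single]
    ring
  obtain ⟨E', hE'eff, hE'equiv⟩ := h (F + P) hF'eff hF'deg
  refine ⟨E' + P, ?_, ?_⟩
  · intro v
    simp only [Pi.add_apply]
    have h1 := hE'eff v
    have h2 := hPeff v
    omega
  · obtain ⟨f, hf⟩ := hE'equiv
    refine ⟨f, ?_⟩
    funext v
    have h1 := congrFun hf v
    simp only [Pi.sub_apply, Pi.add_apply] at h1 ⊢
    omega

lemma rank_upper (hne : Nonempty G.V) (D : G.Divisor) :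
    ∀ r ∈ {r : ℤ | r = -1 ∨ (0 ≤ r ∧ G.RankGe D r)}, r ≤ max (G.degree D) 0 := by
  intro r hr
  rcases hr with rfl | ⟨hr0, hRk⟩
  · have := le_max_right (G.degree D) 0
    omega
  · obtain ⟨q⟩ := hne
    obtain ⟨E', hE'eff, hE'equiv⟩ := hRk (fun v => if v = q then r else 0)
      (by intro v; dsimp only; split <;> omega) (G.degree_single q r)
    have hdeg := LinEquiv.degree_eq G hE'equiv
    have hnn := G.degree_nonneg_of_eff hE'eff
    rw [G.degree_sub, G.degree_single] at hdeg
    have := le_max_left (G.degree D) 0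
    omega

lemma one_le_rank (hne : Nonempty G.V) {D : G.Divisor} (h : G.RankGe D 1) :
    1 ≤ G.rank D := by
  apply le_csSup ⟨max (G.degree D) 0, fun r hr => G.rank_upper hne D r hr⟩
  exact Or.inr ⟨by norm_num, h⟩

lemma rankGe_one_of_rank (hne : Nonempty G.V) {D : G.Divisor} (h : 1 ≤ G.rank D) :
    G.RankGe D 1 := by
  have hbdd : ∃ b, ∀ z ∈ {r : ℤ | r = -1 ∨ (0 ≤ r ∧ G.RankGe D r)}, z ≤ b :=
    ⟨max (G.degree D) 0, G.rank_upper hne D⟩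
  have hne' : ∃ z, z ∈ {r : ℤ | r = -1 ∨ (0 ≤ r ∧ G.RankGe D r)} := ⟨-1, Or.inl rfl⟩
  obtain ⟨m, hmS, hub⟩ := Int.exists_greatest_of_bdd hbdd hne'
  have hsup : G.rank D = m := by
    rw [rank]
    exact le_antisymm (csSup_le ⟨-1, Or.inl rfl⟩ hub)
      (le_csSup ⟨max (G.degree D) 0, fun r hr => G.rank_upper hne D r hr⟩ hmS)
  rw [hsup] at h
  rcases hmS with rfl | ⟨hm0, hRk⟩
  · omega
  · exact G.rankGe_mono hne hRk (by norm_num) h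

lemma gonset_card_mem (hne : Nonempty G.V) :
    Fintype.card G.V ∈ {n : ℕ | ∃ D : G.Divisor, G.Effective D ∧ G.degree D = (n : ℤ)
      ∧ 1 ≤ G.rank D} := by
  refine ⟨fun _ => 1, fun v => by norm_num, ?_, ?_⟩
  · simp only [degree]
    rw [Finset.sum_const, Finset.card_univ, nsmul_eq_mul, mul_one]
  · apply G.one_le_rank hne
    intro F hFeff hFdeg
    refine ⟨(fun _ => (1:ℤ)) - F, ?_, LinEquiv.refl G _⟩
    intro v
    simp only [Pi.sub_apply]
    have h1 := G.apply_le_degree_of_eff hFeff v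
    rw [hFdeg] at h1
    omega

end Multigraph

/-- If `G` is a graph of gonality 3, then `g(G) ≥ 3`, and either
`η(G) ≤ 3` (that is, `G` is not 4-edge-connected) or `|V(G)| = 3`. -/
theorem stmt_1 (G : Multigraph) (hG : G.Connected) (h : G.gonality = 3) :
    3 ≤ G.genus ∧ (¬ G.EdgeConnected 4 ∨ Fintype.card G.V = 3) := by
  classical
  have hne : Nonempty G.V := hG.1
  have hgon : sInf {n : ℕ | ∃ D : G.Divisor, G.Effective D ∧ G.degree D = (n : ℤ)
      ∧ 1 ≤ G.rank D} = 3 := h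
  have hcardmem := G.gonset_card_mem hne
  have hSne : {n : ℕ | ∃ D : G.Divisor, G.Effective D ∧ G.degree D = (n : ℤ)
      ∧ 1 ≤ G.rank D}.Nonempty := ⟨_, hcardmem⟩
  have h3mem : 3 ∈ {n : ℕ | ∃ D : G.Divisor, G.Effective D ∧ G.degree D = (n : ℤ)
      ∧ 1 ≤ G.rank D} := hgon ▸ Nat.sInf_mem hSne
  have hge3 : ∀ n ∈ {n : ℕ | ∃ D : G.Divisor, G.Effective D ∧ G.degree D = (n : ℤ)
      ∧ 1 ≤ G.rank D}, 3 ≤ n := fun n hn => hgon ▸ Nat.sInf_le hn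
  constructor
  · -- genus ≥ 3
    by_contra hcon
    push_neg at hcon
    have hg0 := G.genus_nonneg hG
    have hcases : G.genus ≤ 1 ∨ G.genus = 2 := by omega
    rcases hcases with hg1 | hg2
    · obtain ⟨q⟩ := hG.1
      set D : G.Divisor := fun v => if v = q then G.genus + 1 else 0 with hD
      have hDeff : G.Effective D := by
        intro v
        simp only [hD]
        split <;> omega
      have hDdeg : G.degree D = G.genus + 1 := G.degree_single q _
      have hDrk : G.RankGe D 1 := by
        intro F hFeff hFdeg
        apply G.riemann hG
        rw [G.degree_sub, hDdeg, hFdeg]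
        omega
      have hmem : (G.genus + 1).toNat ∈ {n : ℕ | ∃ D : G.Divisor, G.Effective D
          ∧ G.degree D = (n : ℤ) ∧ 1 ≤ G.rank D} := by
        refine ⟨D, hDeff, ?_, G.one_le_rank hne hDrk⟩
        rw [hDdeg, Int.toNat_of_nonneg (by omega)]
      have h3' := hge3 _ hmem
      omega
    · obtain ⟨D, hDeff, hDdeg, hDrk⟩ := G.genus_two_exists hG hg2
      have hmem : 2 ∈ {n : ℕ | ∃ D : G.Divisor, G.Effective D ∧ G.degree D = (n : ℤ)
          ∧ 1 ≤ G.rank D} := ⟨D, hDeff, by rw [hDdeg]; norm_num, G.one_le_rank hne hDrk⟩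
      have := hge3 _ hmem
      omega
  · -- edge connectivity
    by_cases hV3 : Fintype.card G.V = 3
    · exact Or.inr hV3
    refine Or.inl ?_
    intro hEC
    have h3V : 3 ≤ Fintype.card G.V := hge3 _ hcardmem
    have h4V : 4 ≤ Fintype.card G.V := by omega
    obtain ⟨D, hDeff, hDdeg, hDrank⟩ := h3mem
    have hRk1 : G.RankGe D 1 := G.rankGe_one_of_rank hne hDrank
    have hqex : ∃ q, D q = 0 := by
      by_contra hc
      push_neg at hc
      have hall : ∀ v, 1 ≤ D v := by
        intro v
        have h1 := hDeff v
        have h2 := hc v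
        omega
      have hdegge : (Fintype.card G.V : ℤ) ≤ G.degree D := by
        calc (Fintype.card G.V : ℤ) = ∑ _v : G.V, (1:ℤ) := by
              rw [Finset.sum_const, Finset.card_univ, nsmul_eq_mul, mul_one]
          _ ≤ ∑ v, D v := Finset.sum_le_sum (fun v _ => hall v)
      have h4' : (4:ℤ) ≤ (Fintype.card G.V : ℤ) := by exact_mod_cast h4V
      rw [hDdeg] at hdegge
      omega
    obtain ⟨q, hq0⟩ := hqex
    obtain ⟨E1, hE1eff, hequiv⟩ := hRk1 (G.delta q) (G.effective_delta q) (G.degree_delta q)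
    obtain ⟨f, hf⟩ := hequiv
    have hfeq : ∀ v, D v - (E1 v + G.delta q v) = G.laplacian f v := by
      intro v
      have h1 := congrFun hf v
      simp only [Pi.sub_apply] at h1
      omega
    obtain ⟨v0, _, hv0max⟩ := Finset.exists_max_image Finset.univ f ⟨q, Finset.mem_univ q⟩
    set A : Finset G.V := Finset.univ.filter (fun x => f x = f v0) with hA
    have hAne : A.Nonempty := ⟨v0, by simp [hA]⟩
    have hAuniv : A ≠ Finset.univ := by
      intro hAeq
      have hconst : ∀ v, f v = f v0 := by
        intro v
        have hv : v ∈ A := hAeq ▸ Finset.mem_univ v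
        simpa [hA] using hv
      have hlap0 : G.laplacian f q = 0 := by
        rw [Multigraph.laplacian]
        apply Finset.sum_eq_zero
        intro w _
        rw [hconst q, hconst w]
        ring
      have h1 := hfeq q
      rw [hlap0, hq0] at h1
      have h2 := hE1eff q
      have h3 : G.delta q q = 1 := by simp [Multigraph.delta]
      omega
    set W : Finset G.E := Finset.univ.filter (fun e => ∃ u w, G.ends e = s(u, w) ∧ u ∈ A ∧ w ∉ A)
      with hW
    have hWcard : 4 ≤ W.card := by
      by_contra hlt
      push_neg at hlt
      obtain ⟨e, heW, u, w, hew, huA, hwA⟩ := (hEC W (by omega)).2 A hAne hAuniv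
      apply heW
      simp only [hW, Finset.coe_filter, Finset.mem_univ, true_and, Set.mem_setOf_eq]
      exact ⟨u, w, hew, huA, hwA⟩
    have hcross := G.card_cross A
    rw [← hW] at hcross
    have hsumlap := G.sum_lap A f
    have hterms : ∑ x ∈ A, ∑ y ∈ Aᶜ, (G.numEdges x y : ℤ)
        ≤ ∑ x ∈ A, ∑ y ∈ Aᶜ, (G.numEdges x y : ℤ) * (f x - f y) := by
      apply Finset.sum_le_sum
      intro x hx
      apply Finset.sum_le_sum
      intro y hy
      have hfx : f x = f v0 := by simpa [hA] using hx
      have hfy : ¬ f y = f v0 := by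
        have h1 := hy
        simp only [Finset.mem_compl, hA, Finset.mem_filter, Finset.mem_univ, true_and] at h1
        exact h1
      have h2 := hv0max y (Finset.mem_univ y)
      have h3 : (1:ℤ) ≤ f x - f y := by omega
      exact le_mul_of_one_le_right (Int.natCast_nonneg _) h3
    have hDsum : ∑ v ∈ A, D v ≤ 3 := by
      have h1 := G.sum_le_degree_of_eff hDeff A
      rw [hDdeg] at h1
      exact h1
    have hEsum : 0 ≤ ∑ v ∈ A, (E1 v + G.delta q v) := by
      apply Finset.sum_nonneg
      intro v _
      have h1 := hE1eff v
      have h2 := G.effective_delta q v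
      omega
    have hlapA : ∑ v ∈ A, G.laplacian f v = ∑ v ∈ A, D v - ∑ v ∈ A, (E1 v + G.delta q v) := by
      rw [← Finset.sum_sub_distrib]
      apply Finset.sum_congr rfl
      intro v _
      rw [← hfeq v]
    have hWZ : (4:ℤ) ≤ (W.card : ℤ) := by exact_mod_cast hWcard
    linarith
end

section
/- For any graph G, gon(G) ≥ min{|V(G)|, η(G)}, where η(G) is the edge-connectivity of G. -/
namespace Multigraph

lemma aux_ncard_filter {α : Type} [Fintype α] (p : α → Prop) [DecidablePred p] :
    Set.ncard {e | p e} = (Finset.univ.filter p).card := by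
  rw [Set.ncard_eq_toFinset_card']
  congr 1
  ext e
  simp

lemma aux_numEdges_symm (G : Multigraph) (u v : G.V) : G.numEdges u v = G.numEdges v u := by
  unfold numEdges
  rw [Sym2.eq_swap]

lemma aux_degree_laplacian (G : Multigraph) (f : G.V → ℤ) :
    G.degree (G.laplacian f) = 0 := by
  unfold degree laplacian
  have h1 : (∑ v : G.V, ∑ w : G.V, (G.numEdges v w : ℤ) * (f v - f w))
      = ∑ v : G.V, ∑ w : G.V, -((G.numEdges v w : ℤ) * (f v - f w)) := by
    rw [Finset.sum_comm]
    refine Finset.sum_congr rfl fun w _ => Finset.sum_congr rfl fun v _ => ?_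
    rw [aux_numEdges_symm]; ring
  simp only [Finset.sum_neg_distrib] at h1
  linarith

/-- Key lemma: if `G` is `k`-edge-connected, and `D` is an effective divisor with
`RankGe D r` for some `r ≥ 1` and degree less than `|V|`, then `deg D ≥ k`. -/
lemma aux_key (G : Multigraph) (k : ℕ) (hk : G.EdgeConnected k) (D : G.Divisor)
    (hD : G.Effective D) (r : ℤ) (hr : 1 ≤ r) (hrk : G.RankGe D r)
    (hcard : G.degree D < Fintype.card G.V) : (k : ℤ) ≤ G.degree D := by
  classical
  have hdeg0 : 0 ≤ G.degree D := Finset.sum_nonneg fun v _ => hD v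
  have hVpos : 0 < Fintype.card G.V := by omega
  have hNe : Nonempty G.V := Fintype.card_pos_iff.mp hVpos
  -- find a vertex q with D q = 0
  have hq : ∃ q, D q = 0 := by
    by_contra h
    push_neg at h
    have h1 : ∀ q, 1 ≤ D q := fun q => by have := hD q; have := h q; omega
    have h2 : (Fintype.card G.V : ℤ) ≤ G.degree D := by
      unfold degree
      calc (Fintype.card G.V : ℤ) = ∑ _v : G.V, (1 : ℤ) := by simp
        _ ≤ ∑ v, D v := Finset.sum_le_sum (fun v _ => h1 v)
    omega
  obtain ⟨q, hq⟩ := hq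
  set F : G.Divisor := fun v => if v = q then r else 0 with hF
  have hFeff : G.Effective F := fun v => by simp only [hF]; split <;> omega
  have hFdeg : G.degree F = r := by
    simp [degree, hF, Finset.sum_ite_eq]
  obtain ⟨E', hE', f, hf⟩ := hrk F hFeff hFdeg
  have hfv : ∀ v, D v - F v - E' v = G.laplacian f v := fun v => by
    have := congrFun hf v
    simpa using this
  have hUnivNe : (Finset.univ : Finset G.V).Nonempty := Finset.univ_nonempty
  set M := Finset.univ.sup' hUnivNe f with hM
  have hfle : ∀ v, f v ≤ M := fun v => Finset.le_sup' f (Finset.mem_univ v)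
  set A : Finset G.V := Finset.univ.filter (fun v => f v = M) with hA
  have hAne : A.Nonempty := by
    obtain ⟨v, hv, hveq⟩ := Finset.exists_mem_eq_sup' hUnivNe f
    exact ⟨v, by simp [hA, hveq.symm, hM]⟩
  -- f is not constant
  have hnc : ∃ w, f w ≠ M := by
    by_contra h
    push_neg at h
    have hLf : G.laplacian f q = 0 := by
      unfold laplacian
      apply Finset.sum_eq_zero
      intro w _
      rw [h q, h w]; ring
    have h3 := hfv q
    rw [hLf] at h3
    simp only [hF, hq, if_pos rfl] at h3
    have := hE' q
    omega
  obtain ⟨w₀, hw₀⟩ := hnc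
  have hAneU : A ≠ Finset.univ := by
    intro h
    have : w₀ ∈ A := h ▸ Finset.mem_univ w₀
    simp [hA] at this
    exact hw₀ this
  -- the edge cut of A
  set W : Finset G.E := Finset.univ.filter
    (fun e => ∃ u v, G.ends e = s(u, v) ∧ u ∈ A ∧ v ∉ A) with hW
  have hkW : k ≤ W.card := by
    by_contra h
    push_neg at h
    obtain ⟨_, hconn⟩ := hk W h
    obtain ⟨e, heW, u, v, he, hu, hv⟩ := hconn A hAne hAneU
    exact heW (by simp only [hW, Finset.coe_filter, Finset.mem_univ, true_and,
      Set.mem_setOf_eq]; exact ⟨u, v, he, hu, hv⟩)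
  have hWle : W.card ≤ ∑ p ∈ A ×ˢ Aᶜ, G.numEdges p.1 p.2 := by
    have hsub : W ⊆ (A ×ˢ Aᶜ).biUnion
        (fun p => Finset.univ.filter (fun e => G.ends e = s(p.1, p.2))) := by
      intro e he
      simp only [hW, Finset.mem_filter, Finset.mem_univ, true_and] at he
      obtain ⟨u, v, hesv, hu, hv⟩ := he
      apply Finset.mem_biUnion.mpr
      exact ⟨(u, v), by simp [Finset.mem_product, hu, hv], by simp [hesv]⟩
    calc W.card ≤ _ := Finset.card_le_card hsub
      _ ≤ ∑ p ∈ A ×ˢ Aᶜ, (Finset.univ.filter (fun e => G.ends e = s(p.1, p.2))).card :=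
          Finset.card_biUnion_le
      _ = ∑ p ∈ A ×ˢ Aᶜ, G.numEdges p.1 p.2 := by
          refine Finset.sum_congr rfl fun p _ => ?_
          rw [numEdges, aux_ncard_filter]
  have hstep : (∑ p ∈ A ×ˢ Aᶜ, (G.numEdges p.1 p.2 : ℤ)) ≤ ∑ v ∈ A, G.laplacian f v := by
    rw [Finset.sum_product]
    apply Finset.sum_le_sum
    intro u hu
    have hfu : f u = M := by simpa [hA] using hu
    show _ ≤ ∑ v : G.V, (G.numEdges u v : ℤ) * (f u - f v)
    have hsplit : ∑ v : G.V, (G.numEdges u v : ℤ) * (f u - f v)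
        = (∑ v ∈ A, (G.numEdges u v : ℤ) * (f u - f v))
          + ∑ v ∈ Aᶜ, (G.numEdges u v : ℤ) * (f u - f v) :=
      (Finset.sum_add_sum_compl A _).symm
    rw [hsplit]
    have h1 : (∑ v ∈ A, (G.numEdges u v : ℤ) * (f u - f v)) = 0 := by
      apply Finset.sum_eq_zero
      intro v hv
      have : f v = M := by simpa [hA] using hv
      rw [hfu, this]; ring
    rw [h1, zero_add]
    apply Finset.sum_le_sum
    intro v hv
    have hvA : f v ≠ M := by simpa [hA] using hv
    have h2 : f v < M := lt_of_le_of_ne (hfle v) hvA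
    have h3 : 1 ≤ f u - f v := by omega
    calc (G.numEdges u v : ℤ) = (G.numEdges u v : ℤ) * 1 := by ring
      _ ≤ _ := mul_le_mul_of_nonneg_left h3 (Int.natCast_nonneg _)
  have hlapD : ∑ v ∈ A, G.laplacian f v ≤ ∑ v ∈ A, D v := by
    apply Finset.sum_le_sum
    intro v _
    have h4 := hfv v
    have hF0 : 0 ≤ F v := hFeff v
    have hE0 : 0 ≤ E' v := hE' v
    omega
  have hDsum : ∑ v ∈ A, D v ≤ G.degree D :=
    Finset.sum_le_sum_of_subset_of_nonneg (Finset.subset_univ A) (fun v _ _ => hD v)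
  have hcast : (W.card : ℤ) ≤ ∑ p ∈ A ×ˢ Aᶜ, (G.numEdges p.1 p.2 : ℤ) := by
    exact_mod_cast hWle
  calc (k : ℤ) ≤ W.card := by exact_mod_cast hkW
    _ ≤ _ := hcast
    _ ≤ _ := hstep
    _ ≤ _ := hlapD
    _ ≤ _ := hDsum

/-- The all-ones divisor has rank at least 1, so `|V|` lies in the gonality set. -/
lemma aux_allones (G : Multigraph) (hV : Nonempty G.V) :
    (Fintype.card G.V) ∈
      {n : ℕ | ∃ D : G.Divisor, G.Effective D ∧ G.degree D = (n : ℤ) ∧ 1 ≤ G.rank D} := by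
  classical
  refine ⟨fun _ => 1, fun v => one_pos.le, by simp [degree], ?_⟩
  have h1mem : (1 : ℤ) ∈ {r : ℤ | r = -1 ∨ (0 ≤ r ∧ G.RankGe (fun _ => 1) r)} := by
    right
    refine ⟨one_pos.le, ?_⟩
    intro F hF hFdeg
    refine ⟨(fun _ => 1) - F, ?_, 0, ?_⟩
    · intro v
      have hle1 : F v ≤ 1 := by
        have h := Finset.single_le_sum (f := F) (fun i _ => hF i) (Finset.mem_univ v)
        rw [show (∑ i, F i) = G.degree F from rfl, hFdeg] at h
        exact h
      simp only [Pi.sub_apply]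
      omega
    · funext v
      simp [laplacian]
  have hbdd : BddAbove {r : ℤ | r = -1 ∨ (0 ≤ r ∧ G.RankGe (fun _ => 1) r)} := by
    refine ⟨(Fintype.card G.V : ℤ), fun r hr => ?_⟩
    rcases hr with rfl | ⟨hr0, hRG⟩
    · have : (0 : ℤ) ≤ Fintype.card G.V := Int.natCast_nonneg _
      omega
    · obtain ⟨q⟩ := hV
      set F : G.Divisor := fun v => if v = q then r else 0 with hFdef
      have hFeff : G.Effective F := fun v => by simp only [hFdef]; split <;> omega
      have hFdeg : G.degree F = r := by simp [degree, hFdef, Finset.sum_ite_eq]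
      obtain ⟨E', hE', f, hf⟩ := hRG F hFeff hFdeg
      have hdeg := congrArg G.degree hf
      rw [aux_degree_laplacian] at hdeg
      have hsub : G.degree ((fun _ => (1:ℤ)) - F - E')
          = G.degree (fun _ => (1:ℤ)) - G.degree F - G.degree E' := by
        simp [degree, Finset.sum_sub_distrib]
      rw [hsub, hFdeg] at hdeg
      have hones : G.degree (fun _ => (1:ℤ)) = (Fintype.card G.V : ℤ) := by simp [degree]
      have hE'deg : 0 ≤ G.degree E' := Finset.sum_nonneg fun v _ => hE' v
      rw [hones] at hdeg
      omega
  show (1 : ℤ) ≤ sSup _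
  exact le_csSup hbdd h1mem

end Multigraph

/-- For any graph `G`, `gon(G) ≥ min {|V(G)|, η(G)}`: for every `k`
such that `G` is `k`-edge-connected, `gon(G) ≥ min {|V(G)|, k}`. -/
theorem stmt_6 (G : Multigraph) (hG : G.Connected) :
    ∀ k : ℕ, G.EdgeConnected k → min (Fintype.card G.V) k ≤ G.gonality := by
  intro k hk
  have hV : Nonempty G.V := hG.1
  have hmem := G.aux_allones hV
  have hSne : {n : ℕ | ∃ D : G.Divisor, G.Effective D ∧ G.degree D = (n : ℤ) ∧
      1 ≤ G.rank D}.Nonempty := ⟨_, hmem⟩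
  have hgon : G.gonality ∈ {n : ℕ | ∃ D : G.Divisor, G.Effective D ∧ G.degree D = (n : ℤ) ∧
      1 ≤ G.rank D} := Nat.sInf_mem hSne
  obtain ⟨D, hD, hdeg, hrank⟩ := hgon
  rcases le_or_gt (Fintype.card G.V) G.gonality with h | h
  · exact le_trans (min_le_left _ _) h
  · have hlt : G.degree D < (Fintype.card G.V : ℤ) := by
      rw [hdeg]; exact_mod_cast h
    have hpos : (0 : ℤ) < sSup {r : ℤ | r = -1 ∨ (0 ≤ r ∧ G.RankGe D r)} := by
      have : G.rank D = sSup {r : ℤ | r = -1 ∨ (0 ≤ r ∧ G.RankGe D r)} := rfl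
      omega
    have hSne' : {r : ℤ | r = -1 ∨ (0 ≤ r ∧ G.RankGe D r)}.Nonempty := ⟨-1, Or.inl rfl⟩
    obtain ⟨r, hrS, hr0⟩ := exists_lt_of_lt_csSup hSne' hpos
    rcases hrS with rfl | ⟨hr0', hRG⟩
    · omega
    · have hkey := G.aux_key k hk D hD r (by omega) hRG hlt
      have hkg : k ≤ G.gonality := by
        rw [hdeg] at hkey
        exact_mod_cast hkey
      exact le_trans (min_le_right _ _) hkg
end
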